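/- arXiv:1405.1812 — 9 statements merged into one kernel-verified Lean document; each statement's English description precedes it below -/
import Mathlib

section
/- In any orientation of the edges of a simple graph G, there exists a directed path containing at least χ(G) vertices. -/
open SimpleGraph

private lemma rtg_of_mem_chain' {V : Type*} {r : V → V → Prop} :
    ∀ (l : List V), l.Chain' r → ∀ x ∈ l, ∀ u, l.getLast? = some u →
      Relation.ReflTransGen r x u := by
  intro l
  induction l with
  | nil => intro _ x hx; simp at hx
  | cons a t ih =>
    intro hc x hx u hu
    cases t with
    | nil =>
      simp at hx hu
      subst hx; subst hu; exact Relation.ReflTransGen.refl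
    | cons b t' =>
      have hc' : (b :: t').Chain' r := hc.tail
      have hu' : (b :: t').getLast? = some u := by
        rw [List.getLast?_cons_cons] at hu; exact hu
      rcases List.mem_cons.1 hx with rfl | hx'
      · have hab : r x b := (List.isChain_cons_cons.1 hc).1
        exact Relation.ReflTransGen.head hab (ih hc' b List.mem_cons_self u hu')
      · exact ih hc' x hx' u hu'

/-- **Gallai–Roy.** In any orientation `D` of the edges of a simple graph `G`
(each edge gets exactly one direction), there is a directed path (a list of
distinct vertices consecutively related by `D`) with at least `χ(G)` vertices. -/
theorem gallai_roy {V : Type*} [Fintype V] (G : SimpleGraph V) (D : V → V → Prop)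
    (h_or : ∀ x y, G.Adj x y → D x y ∨ D y x)
    (h_sub : ∀ x y, D x y → G.Adj x y)
    (h_once : ∀ x y, D x y → ¬ D y x) :
    ∃ l : List V, l.Nodup ∧ l.Chain' D ∧ G.chromaticNumber ≤ (l.length : ℕ∞) := by
  classical
  cases isEmpty_or_nonempty V with
  | inl hV =>
    refine ⟨[], List.nodup_nil, List.isChain_nil, ?_⟩
    have : G.Colorable 0 := ⟨⟨fun v => (hV.false v).elim, fun {a} => (hV.false a).elim⟩⟩
    simpa using this.chromaticNumber_le
  | inr hV =>
  -- the finset of all arcs of D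
  set Df : Finset (V × V) := Finset.univ.filter (fun p : V × V => D p.1 p.2) with hDf
  -- acyclicity predicate
  set Acyc : Finset (V × V) → Prop :=
    fun S => ∀ w, ¬ Relation.TransGen (fun u v => (u, v) ∈ S) w w with hAcyc
  -- family of acyclic sub-arc-sets
  have hne : (Df.powerset.filter Acyc).Nonempty := by
    refine ⟨∅, Finset.mem_filter.2 ⟨Finset.mem_powerset.2 (Finset.empty_subset _), ?_⟩⟩
    intro w hw
    cases hw with
    | single h => simp at h
    | tail _ h => simp at h
  obtain ⟨S, hSmem, hSmax⟩ := Finset.exists_max_image (Df.powerset.filter Acyc)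
    Finset.card hne
  have hSsub : S ⊆ Df := Finset.mem_powerset.1 (Finset.mem_filter.1 hSmem).1
  have hSacyc : ∀ w, ¬ Relation.TransGen (fun u v => (u, v) ∈ S) w w :=
    (Finset.mem_filter.1 hSmem).2
  set A : V → V → Prop := fun u v => (u, v) ∈ S with hA
  have hAD : ∀ u v, A u v → D u v := by
    intro u v h
    have := hSsub h
    simpa [hDf] using this
  -- the path-length function
  set P : V → ℕ → Prop := fun v n => ∃ l : List V,
    l.Nodup ∧ l.Chain' A ∧ l.getLast? = some v ∧ l.length = n with hP
  set f : V → ℕ := fun v => Nat.findGreatest (P v) (Fintype.card V) with hf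
  have hcard : 1 ≤ Fintype.card V := Fintype.card_pos
  have hP1 : ∀ v, P v 1 := by
    intro v
    exact ⟨[v], List.nodup_singleton v, List.isChain_singleton v, rfl, rfl⟩
  have hfspec : ∀ v, P v (f v) := fun v => Nat.findGreatest_spec hcard (hP1 v)
  have hf1 : ∀ v, 1 ≤ f v := fun v => Nat.le_findGreatest hcard (hP1 v)
  -- f strictly increases along A
  have hstep : ∀ u v, A u v → f u < f v := by
    intro u v huv
    obtain ⟨l, hnd, hch, hlast, hlen⟩ := hfspec u
    have hvl : v ∉ l := by
      intro hvmem
      have hr := rtg_of_mem_chain' l hch v hvmem u hlast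
      exact hSacyc v (Relation.TransGen.tail' hr huv)
    have hnd' : (l ++ [v]).Nodup := by
      rw [List.nodup_append]
      exact ⟨hnd, List.nodup_singleton v, fun a ha b hb hab => hvl (by simp at hb; subst hb; subst hab; exact ha)⟩
    have hch' : (l ++ [v]).Chain' A := by
      refine hch.append (List.isChain_singleton v) ?_
      intro x hx y hy
      rw [hlast] at hx
      simp at hx hy
      subst hx; subst hy; exact huv
    have hlast' : (l ++ [v]).getLast? = some v := by
      simp [List.getLast?_concat]
    have hPv : P v (f u + 1) := ⟨l ++ [v], hnd', hch', hlast', by simp [hlen]⟩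
    have hle : f u + 1 ≤ Fintype.card V := by
      have := hnd'.length_le_card
      simpa [hlen] using this
    exact Nat.le_findGreatest hle hPv
  -- f strictly increases along TransGen A
  have htg : ∀ u v, Relation.TransGen A u v → f u < f v := by
    intro u v h
    induction h with
    | single h => exact hstep _ _ h
    | tail _ h ih => exact ih.trans (hstep _ _ h)
  -- f distinguishes endpoints of any arc of D
  have hDne : ∀ x y, D x y → f x ≠ f y := by
    intro x y hxy
    have hne' : x ≠ y := (h_sub x y hxy).ne
    by_cases hmem : (x, y) ∈ S
    · exact (hstep x y hmem).ne
    · -- maximality: inserting (x,y) creates a cycle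
      have hnotacyc : ¬ Acyc (insert (x, y) S) := by
        intro hac
        have hmem' : insert (x, y) S ∈ Df.powerset.filter Acyc := by
          refine Finset.mem_filter.2 ⟨Finset.mem_powerset.2 ?_, hac⟩
          intro p hp
          rcases Finset.mem_insert.1 hp with rfl | hp'
          · simp [hDf, hxy]
          · exact hSsub hp'
        have := hSmax _ hmem'
        have hlt : S.card < (insert (x, y) S).card := by
          rw [Finset.card_insert_of_notMem hmem]
          omega
        omega
      simp only [hAcyc, not_forall, not_not] at hnotacyc
      obtain ⟨w, hw⟩ := hnotacyc
      -- decompose the cycle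
      have hdec : ∀ a b, Relation.TransGen (fun u v => (u, v) ∈ insert (x, y) S) a b →
          Relation.TransGen A a b ∨
            (Relation.ReflTransGen A a x ∧ Relation.ReflTransGen A y b) := by
        intro a b h
        induction h with
        | single h =>
          rcases Finset.mem_insert.1 h with h' | h'
          · obtain ⟨rfl, rfl⟩ := Prod.mk.injEq .. ▸ h'
            right
            exact ⟨Relation.ReflTransGen.refl, Relation.ReflTransGen.refl⟩
          · exact Or.inl (Relation.TransGen.single h')
        | tail hab h ih =>
          rename_i b c
          rcases Finset.mem_insert.1 h with h' | h'
          · have hbx : b = x := congrArg Prod.fst h'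
            have hcy : c = y := congrArg Prod.snd h'
            subst hbx; subst hcy
            rcases ih with h1 | ⟨h1, _⟩
            · exact Or.inr ⟨h1.to_reflTransGen, Relation.ReflTransGen.refl⟩
            · exact Or.inr ⟨h1, Relation.ReflTransGen.refl⟩
          · rcases ih with h1 | ⟨h1, h2⟩
            · exact Or.inl (h1.tail h')
            · exact Or.inr ⟨h1, h2.tail h'⟩
      rcases hdec w w hw with h1 | ⟨h1, h2⟩
      · exact absurd h1 (hSacyc w)
      · have hyx : Relation.ReflTransGen A y x := h2.trans h1
        rcases (Relation.reflTransGen_iff_eq_or_transGen.1 hyx) with h' | h'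
        · exact absurd h' hne'
        · exact (htg y x h').ne'
  -- pick a vertex maximizing f
  obtain ⟨v, _, hvmax⟩ := Finset.exists_max_image (Finset.univ : Finset V) f
    Finset.univ_nonempty
  obtain ⟨l, hnd, hch, hlast, hlen⟩ := hfspec v
  refine ⟨l, hnd, hch.imp hAD, ?_⟩
  -- the coloring
  have hfv1 : 1 ≤ f v := hf1 v
  have hcol : G.Colorable (f v) := by
    refine ⟨⟨fun u => ⟨f u - 1, ?_⟩, ?_⟩⟩
    · have := hvmax u (Finset.mem_univ u)
      have := hf1 u
      omega
    · intro a b hab heq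
      have h1 := hf1 a
      have h2 := hf1 b
      have : f a ≠ f b := by
        rcases h_or a b hab with h | h
        · exact hDne a b h
        · exact (hDne b a h).symm
      apply this
      have heq' : f a - 1 = f b - 1 := congrArg Fin.val heq
      omega
  calc G.chromaticNumber ≤ (f v : ℕ∞) := hcol.chromaticNumber_le
    _ = (l.length : ℕ∞) := by rw [hlen]
end

section
/- For every finite simple graph G, the maximum number of vertices on a degree-monotone path in G is at least χ(G). -/
open SimpleGraph

/-- Degree of a vertex (as `ncard` of the neighbor set, avoiding decidability). -/
noncomputable def gdeg {V : Type*} (G : SimpleGraph V) (v : V) : ℕ := (G.neighborSet v).ncard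

/-- A walk is degree-monotone if the degrees along its support are monotone. -/
def DegMonotone {V : Type*} (G : SimpleGraph V) {u v : V} (p : G.Walk u v) : Prop :=
  List.Chain' (· ≤ ·) (p.support.map (gdeg G)) ∨
  List.Chain' (fun a b => b ≤ a) (p.support.map (gdeg G))

/-- `mp G`: the maximum number of vertices on a degree-monotone path of `G`. -/
noncomputable def mp {V : Type*} [Fintype V] (G : SimpleGraph V) : ℕ :=
  sSup {n | ∃ (u v : V) (p : G.Walk u v), p.IsPath ∧ DegMonotone G p ∧ p.support.length = n}

section Aux

variable {V : Type*} [Fintype V] (G : SimpleGraph V)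

/-- Key: lexicographic combination of degree and an arbitrary injection into `Fin (card V)`. -/
noncomputable def gkey (v : V) : ℕ :=
  gdeg G v * Fintype.card V + ((Fintype.equivFin V) v : ℕ)

lemma gkey_lt_of_gdeg_lt {a b : V} (h : gdeg G a < gdeg G b) : gkey G a < gkey G b := by
  unfold gkey
  have ha : ((Fintype.equivFin V) a : ℕ) < Fintype.card V := ((Fintype.equivFin V) a).2
  nlinarith

lemma gdeg_le_of_gkey_lt {a b : V} (h : gkey G a < gkey G b) : gdeg G a ≤ gdeg G b := by
  by_contra hc
  exact absurd (gkey_lt_of_gdeg_lt G (lt_of_not_ge hc)) (not_lt.2 h.le)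

lemma gkey_injective : Function.Injective (gkey G) := by
  intro a b h
  have ha : ((Fintype.equivFin V) a : ℕ) < Fintype.card V := ((Fintype.equivFin V) a).2
  have hb : ((Fintype.equivFin V) b : ℕ) < Fintype.card V := ((Fintype.equivFin V) b).2
  unfold gkey at h
  have hmod : ((Fintype.equivFin V) a : ℕ) = ((Fintype.equivFin V) b : ℕ) := by
    have h1 : (gdeg G a * Fintype.card V + ((Fintype.equivFin V) a : ℕ)) % Fintype.card V
        = ((Fintype.equivFin V) a : ℕ) := by
      rw [Nat.mul_comm, Nat.mul_add_mod, Nat.mod_eq_of_lt ha]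
    have h2 : (gdeg G b * Fintype.card V + ((Fintype.equivFin V) b : ℕ)) % Fintype.card V
        = ((Fintype.equivFin V) b : ℕ) := by
      rw [Nat.mul_comm, Nat.mul_add_mod, Nat.mod_eq_of_lt hb]
    rw [h] at h1
    omega
  exact (Fintype.equivFin V).injective (Fin.ext hmod)

/-- The set of lengths of key-decreasing paths starting at `v`. -/
def keySet (v : V) : Set ℕ :=
  {n | ∃ (w : V) (q : G.Walk v w), q.IsPath ∧
    List.Chain' (fun a b => gkey G b < gkey G a) q.support ∧ q.support.length = n}

lemma keySet_nonempty (v : V) : (keySet G v).Nonempty :=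
  ⟨1, v, Walk.nil, by simp [Walk.isPath_iff_eq_nil, List.Chain']⟩

lemma keySet_bddAbove (v : V) : BddAbove (keySet G v) := by
  refine ⟨Fintype.card V, ?_⟩
  rintro n ⟨w, q, hq, _, rfl⟩
  exact hq.support_nodup.length_le_card

/-- The coloring function: max length of a key-decreasing path starting at `v`. -/
noncomputable def fcol (v : V) : ℕ := sSup (keySet G v)

lemma fcol_mem (v : V) : fcol G v ∈ keySet G v :=
  Nat.sSup_mem (keySet_nonempty G v) (keySet_bddAbove G v)

lemma one_le_fcol (v : V) : 1 ≤ fcol G v :=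
  le_csSup (keySet_bddAbove G v) ⟨v, Walk.nil, by simp [Walk.isPath_iff_eq_nil, List.Chain']⟩

lemma fcol_lt_fcol {u v : V} (h : G.Adj v u) (hk : gkey G u < gkey G v) :
    fcol G u < fcol G v := by
  obtain ⟨w, q, hq, hchain, hlen⟩ := fcol_mem G u
  -- every vertex of q has key ≤ key u
  have hall : ∀ x ∈ q.support, gkey G x ≤ gkey G u := by
    have hpw : List.Pairwise (fun a b => gkey G b < gkey G a) q.support := by
      have : IsTrans V (fun a b => gkey G b < gkey G a) :=
        ⟨fun _ _ _ h1 h2 => h2.trans h1⟩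
      exact List.isChain_iff_pairwise.1 hchain
    intro x hx
    rw [q.support_eq_cons] at hx hpw
    rcases List.mem_cons.1 hx with hx | hx
    · subst hx
      exact le_refl _
    · exact (List.rel_of_pairwise_cons hpw hx).le
  have hv : v ∉ q.support := fun hmem => absurd (hall v hmem) (not_le.2 hk)
  have hmem : fcol G u + 1 ∈ keySet G v := by
    refine ⟨w, q.cons h, hq.cons hv, ?_, by simp [hlen]⟩
    rw [Walk.support_cons, List.Chain', List.isChain_cons]
    refine ⟨?_, hchain⟩
    intro y hy
    rw [q.support_eq_cons] at hy
    simp only [List.head?_cons, Option.mem_def, Option.some.injEq] at hy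
    subst hy
    exact hk
  exact lt_of_lt_of_le (Nat.lt_succ_self _) (le_csSup (keySet_bddAbove G v) hmem)

lemma fcol_le_mp (v : V) : fcol G v ≤ mp G := by
  obtain ⟨w, q, hq, hchain, hlen⟩ := fcol_mem G v
  refine le_csSup ?_ ⟨v, w, q, hq, ?_, hlen⟩
  · refine ⟨Fintype.card V, ?_⟩
    rintro n ⟨a, b, p, hp, _, rfl⟩
    exact hp.support_nodup.length_le_card
  · right
    exact List.isChain_map_of_isChain (R := fun a b => gkey G b < gkey G a)
      (S := fun a b => b ≤ a) (gdeg G)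
      (fun a b hab => gdeg_le_of_gkey_lt G hab) hchain

end Aux

/-- For every finite simple graph `G`, `mp(G) ≥ χ(G)`. -/
theorem mp_ge_chromaticNumber {V : Type*} [Fintype V] (G : SimpleGraph V) :
    G.chromaticNumber ≤ (mp G : ℕ∞) := by
  cases isEmpty_or_nonempty V with
  | inl h =>
    exact le_trans (SimpleGraph.Colorable.of_isEmpty (G := G) 0).chromaticNumber_le (by simp)
  | inr h =>
    have hcol : G.Colorable (mp G) := by
      refine ⟨⟨fun v => ⟨fcol G v - 1, ?_⟩, ?_⟩⟩
      · have h1 := one_le_fcol G v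
        have h2 := fcol_le_mp G v
        omega
      · intro a b hab
        have hne : gkey G a ≠ gkey G b := fun he => G.ne_of_adj hab (gkey_injective G he)
        have h1a := one_le_fcol G a
        have h1b := one_le_fcol G b
        intro hEq
        have hEq' : fcol G a - 1 = fcol G b - 1 := congrArg Fin.val hEq
        rcases lt_or_gt_of_ne hne with hk | hk
        · have := fcol_lt_fcol G hab.symm hk
          omega
        · have := fcol_lt_fcol G hab hk
          omega
    exact hcol.chromaticNumber_le
end

section
/- For every k ≥ 1 and n large enough, there exists a graph G on n vertices with χ(G) = k and mp(G) = k; specifically, the complete multipartite graph with k parts of pairwise distinct sizes satisfies mp(G) = χ(G) = k. -/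
open SimpleGraph

private lemma exists_walk_of_chain {V : Type*} (G : SimpleGraph V) :
    ∀ (l : List V) (a : V), List.Chain G.Adj a l →
      ∃ (b : V) (p : G.Walk a b), p.support = a :: l
  | [], a, _ => ⟨a, SimpleGraph.Walk.nil, rfl⟩
  | (c :: t), a, h => by
      simp only [List.Chain] at h
      rw [List.chain_cons] at h
      obtain ⟨b, p, hp⟩ := exists_walk_of_chain G t c h.2
      exact ⟨b, SimpleGraph.Walk.cons h.1 p, by simp [hp]⟩

private def fiberEquiv {k : ℕ} (s : Fin k → ℕ) (i : Fin k) :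
    {v : Σ j, Fin (s j) // v.1 = i} ≃ Fin (s i) where
  toFun v := Fin.cast (by rw [v.2]) v.1.2
  invFun a := ⟨⟨i, a⟩, rfl⟩
  left_inv := by rintro ⟨⟨j, a⟩, rfl⟩; rfl
  right_inv a := rfl

private lemma chain'_and {α : Type*} {R S : α → α → Prop} {l : List α}
    (h1 : List.Chain' R l) (h2 : List.Chain' S l) :
    List.Chain' (fun a b => R a b ∧ S a b) l := by
  unfold List.Chain' at h1 h2 ⊢
  rw [List.isChain_iff_getElem] at h1 h2 ⊢
  exact fun i h => ⟨h1 i h, h2 i h⟩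

/-- For every `k ≥ 1` and all sufficiently large `n` there is a graph on `n` vertices
with `χ(G) = k` and `mp(G) = k`; specifically, a complete multipartite graph with `k`
parts of pairwise distinct sizes works. -/
theorem exists_mp_eq_chromaticNumber (k : ℕ) (hk : 1 ≤ k) :
    ∃ N : ℕ, ∀ n ≥ N, ∃ (G : SimpleGraph (Fin n)) (f : Fin n → Fin k),
      (∀ x y, G.Adj x y ↔ f x ≠ f y) ∧
      Function.Surjective f ∧
      (∀ i j : Fin k, i ≠ j →
        (Finset.univ.filter fun x => f x = i).card ≠ (Finset.univ.filter fun x => f x = j).card) ∧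
      G.chromaticNumber = (k : ℕ∞) ∧ mp G = k := by
  obtain ⟨m, rfl⟩ : ∃ m, k = m + 1 := ⟨k - 1, (Nat.succ_pred_eq_of_pos hk).symm⟩
  set T : ℕ := ∑ i ∈ Finset.range m, (i + 1) with hT
  refine ⟨T + (m + 1), fun n hn => ?_⟩
  have hTn : T ≤ n := le_trans (Nat.le_add_right _ _) hn
  have hlast : m + 1 ≤ n - T := le_tsub_of_add_le_left (by omega)
  -- part sizes
  set s : Fin (m + 1) → ℕ := fun i => if (i : ℕ) < m then (i : ℕ) + 1 else n - T with hs
  have hs_pos : ∀ i, 1 ≤ s i := by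
    intro i; simp only [hs]; split
    · omega
    · omega
  have hs_inj : Function.Injective s := by
    intro i j hij
    have hi := i.isLt; have hj := j.isLt
    simp only [hs] at hij
    apply Fin.ext
    split at hij <;> split at hij <;> omega
  have hsum : ∑ i, s i = n := by
    rw [Fin.sum_univ_castSucc]
    have h1 : ∀ i : Fin m, s i.castSucc = (i : ℕ) + 1 := by
      intro i; simp only [hs, Fin.coe_castSucc]; rw [if_pos i.isLt]
    have h2 : s (Fin.last m) = n - T := by
      simp only [hs, Fin.val_last]; rw [if_neg (lt_irrefl m)]
    rw [h2]
    have : ∑ i : Fin m, s i.castSucc = T := by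
      rw [Finset.sum_congr rfl (fun i _ => h1 i), hT, ← Fin.sum_univ_eq_sum_range]
    rw [this]; omega
  have hsle : ∀ i, s i ≤ n := by
    intro i
    calc s i ≤ ∑ j, s j := Finset.single_le_sum (fun j _ => Nat.zero_le _) (Finset.mem_univ i)
    _ = n := hsum
  -- the equivalence with a sigma type
  have hcardV : Fintype.card (Σ i, Fin (s i)) = n := by
    simp [Fintype.card_sigma, hsum]
  let e : Fin n ≃ Σ i, Fin (s i) := Fintype.equivOfCardEq (by simp [hcardV])
  set f : Fin n → Fin (m + 1) := fun x => (e x).1 with hf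
  -- the graph
  let G : SimpleGraph (Fin n) :=
    { Adj := fun x y => f x ≠ f y
      symm := ⟨fun x y h => Ne.symm h⟩
      loopless := ⟨fun x h => h rfl⟩ }
  have hadj : ∀ x y, G.Adj x y ↔ f x ≠ f y := fun _ _ => Iff.rfl
  -- fiber cardinalities
  have hcard : ∀ i, (Finset.univ.filter fun x => f x = i).card = s i := by
    intro i
    rw [← Fintype.card_subtype]
    rw [Fintype.card_congr ((e.subtypeEquiv (fun x => Iff.rfl)).trans (fiberEquiv s i))]
    exact Fintype.card_fin _
  -- representatives
  set v : Fin (m + 1) → Fin n := fun i => e.symm ⟨i, ⟨0, hs_pos i⟩⟩ with hvdef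
  have hv : ∀ i, f (v i) = i := by
    intro i; simp only [hf, hvdef, Equiv.apply_symm_apply]
  have hv_inj : Function.Injective v := by
    intro a b h
    rw [← hv a, ← hv b, h]
  have hsurj : Function.Surjective f := fun i => ⟨v i, hv i⟩
  -- degrees
  have hdeg : ∀ x, gdeg G x = n - s (f x) := by
    intro x
    have hset : G.neighborSet x = ↑(Finset.univ.filter fun y => ¬ f y = f x) := by
      ext y
      simp only [mem_neighborSet, Finset.coe_filter, Set.mem_setOf_eq, Finset.mem_univ, true_and]
      exact ne_comm
    rw [gdeg, hset, Set.ncard_coe_finset]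
    have hsplit := Finset.card_filter_add_card_filter_not
      (s := (Finset.univ : Finset (Fin n))) (p := fun y => f y = f x)
    rw [hcard (f x)] at hsplit
    simp only [Finset.card_univ, Fintype.card_fin] at hsplit
    omega
  have hdeginj : ∀ x y : Fin n, gdeg G x = gdeg G y → f x = f y := by
    intro x y h
    rw [hdeg, hdeg] at h
    have h1 := hsle (f x); have h2 := hsle (f y)
    exact hs_inj (by omega)
  -- chromatic number
  have hchrom : G.chromaticNumber = ((m + 1 : ℕ) : ℕ∞) := by
    apply le_antisymm
    · have C : G.Coloring (Fin (m + 1)) := SimpleGraph.Coloring.mk f (fun h => h)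
      have := C.colorable.chromaticNumber_le
      simpa using this
    · let ι : (⊤ : SimpleGraph (Fin (m + 1))) ↪g G :=
        { toFun := v
          inj' := hv_inj
          map_rel_iff' := by
            intro i j
            show f (v i) ≠ f (v j) ↔ _
            rw [hv, hv, top_adj] }
      have := SimpleGraph.chromaticNumber_mono_of_hom ι.toHom
      rwa [SimpleGraph.chromaticNumber_top, Fintype.card_fin] at this
  -- mp
  set S : Set ℕ := {N | ∃ (u w : Fin n) (p : G.Walk u w),
    p.IsPath ∧ DegMonotone G p ∧ p.support.length = N} with hS
  -- the degree function on parts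
  set g : Fin (m + 1) → ℕ := fun i => n - s i with hg
  have hg_inj : Function.Injective g := by
    intro i j h
    have h1 := hsle i; have h2 := hsle j
    exact hs_inj (by simp only [hg] at h; omega)
  -- membership: a monotone path of length m+1
  have hmem : (m + 1) ∈ S := by
    set σ : Equiv.Perm (Fin (m + 1)) := Tuple.sort g with hσ
    have hmono : Monotone (g ∘ σ) := Tuple.monotone_sort g
    have hsm : StrictMono (g ∘ σ) :=
      hmono.strictMono_of_injective (hg_inj.comp σ.injective)
    set l : List (Fin n) := (List.finRange (m + 1)).map (fun i => v (σ i)) with hl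
    have hlen : l.length = m + 1 := by simp [hl]
    have hlget : ∀ (i : ℕ) (h : i < l.length), l[i] = v (σ ⟨i, by simpa [hlen] using h⟩) := by
      intro i h
      simp [hl]
    have hchain : List.Chain' G.Adj l := by
      unfold List.Chain'
      rw [List.isChain_iff_getElem]
      intro i h
      rw [hlget, hlget, hadj, hv, hv]
      intro hcon
      have : (⟨i, by omega⟩ : Fin (m + 1)) = ⟨i + 1, by simp [hlen] at h; omega⟩ :=
        σ.injective (by exact_mod_cast hcon)
      simp at this
    have hne : l ≠ [] := by intro h; rw [h] at hlen; simp at hlen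
    obtain ⟨c, t, hct⟩ := List.exists_cons_of_ne_nil hne
    have hchain' : List.Chain G.Adj c t := by rw [hct] at hchain; exact hchain
    obtain ⟨b, p, hp⟩ := exists_walk_of_chain G t c hchain'
    rw [← hct] at hp
    refine ⟨c, b, p, ?_, ?_, ?_⟩
    · rw [Walk.isPath_def, hp, hl]
      exact (List.nodup_finRange _).map (hv_inj.comp σ.injective)
    · left
      have hcomp : (gdeg G ∘ fun i => v (σ i)) = g ∘ σ := funext fun i => by
        rw [Function.comp_apply, Function.comp_apply, hdeg, hv]
      unfold List.Chain'
      rw [hp, hl, List.map_map, hcomp, List.isChain_iff_getElem]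
      intro i h
      simp only [List.length_map, List.length_finRange] at h
      rw [List.getElem_map, List.getElem_map, List.getElem_finRange, List.getElem_finRange]
      exact hmono (by simp [Fin.le_def])
    · rw [hp, hlen]
  -- upper bound
  have hub : ∀ x ∈ S, x ≤ m + 1 := by
    rintro x ⟨u, w, p, hpath, hmono, hlen⟩
    set L : List ℕ := p.support.map (gdeg G) with hL
    have hLne : List.Chain' (· ≠ ·) L := by
      unfold List.Chain'
      rw [hL, List.isChain_map]
      exact (p.isChain_adj_support).imp
        (fun a b hab hcon => (hadj a b).mp hab (hdeginj a b hcon))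
    have hLnd : L.Nodup := by
      rcases hmono with hm | hm
      · have : List.Chain' (· < ·) L :=
          (chain'_and hm hLne).imp (fun a b h => lt_of_le_of_ne h.1 h.2)
        exact (List.isChain_iff_pairwise.mp this).imp (fun h => ne_of_lt h)
      · have : List.Chain' (· > ·) L :=
          (chain'_and hm hLne).imp (fun a b h => lt_of_le_of_ne h.1 (Ne.symm h.2))
        exact (List.isChain_iff_pairwise.mp this).imp (fun h => ne_of_gt h)
    have hsub : L.toFinset ⊆ Finset.univ.image g := by
      intro a ha
      rw [List.mem_toFinset, hL, List.mem_map] at ha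
      obtain ⟨y, _, rfl⟩ := ha
      rw [hdeg]
      exact Finset.mem_image.mpr ⟨f y, Finset.mem_univ _, rfl⟩
    have h1 : L.length = L.toFinset.card := (List.toFinset_card_of_nodup hLnd).symm
    have h2 : L.toFinset.card ≤ (Finset.univ.image g).card := Finset.card_le_card hsub
    have h3 : (Finset.univ.image g).card ≤ m + 1 :=
      le_trans Finset.card_image_le (by simp)
    have h4 : L.length = x := by rw [hL, List.length_map, hlen]
    omega
  have : mp G = m + 1 := by
    rw [mp]
    apply le_antisymm
    · exact csSup_le ⟨m + 1, hmem⟩ hub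
    · exact le_csSup ⟨m + 1, hub⟩ hmem
  exact ⟨G, f, hadj, hsurj,
    fun i j hij hc => hij (hs_inj (by rw [← hcard i, ← hcard j, hc])),
    by exact_mod_cast hchrom, this⟩
end

section
/- For every finite simple graph G on n vertices, mp(G) ≥ n / α(G), where α(G) is the independence number. -/
open SimpleGraph

/-- The independence number: the maximum size of an independent set of vertices. -/
noncomputable def indepNum {V : Type*} [Fintype V] (G : SimpleGraph V) : ℕ :=
  sSup {n | ∃ s : Finset V, (∀ x ∈ s, ∀ y ∈ s, ¬ G.Adj x y) ∧ s.card = n}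

section Aux

variable {V : Type*} [Fintype V] (G : SimpleGraph V)

/-- A key refining the degree ordering injectively. -/
noncomputable def kkey (v : V) : ℕ :=
  gdeg G v * Fintype.card V + (Fintype.equivFin V v : ℕ)

variable {G}

lemma kkey_lt_of_deg_lt {u v : V} (h : gdeg G u < gdeg G v) : kkey G u < kkey G v := by
  unfold kkey
  calc gdeg G u * Fintype.card V + (Fintype.equivFin V u : ℕ)
      < gdeg G u * Fintype.card V + Fintype.card V := by
        exact Nat.add_lt_add_left (Fintype.equivFin V u).isLt _
    _ = (gdeg G u + 1) * Fintype.card V := by ring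
    _ ≤ gdeg G v * Fintype.card V := Nat.mul_le_mul_right _ h
    _ ≤ _ := Nat.le_add_right _ _

lemma deg_le_of_kkey_lt {u v : V} (h : kkey G u < kkey G v) : gdeg G u ≤ gdeg G v := by
  by_contra hc
  exact absurd (kkey_lt_of_deg_lt (Nat.lt_of_not_le hc)) (Nat.not_lt.mpr h.le)

lemma kkey_injective : Function.Injective (kkey G) := by
  intro u v h
  have hd : gdeg G u = gdeg G v := by
    rcases lt_trichotomy (gdeg G u) (gdeg G v) with h' | h' | h'
    · exact absurd h (kkey_lt_of_deg_lt h').ne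
    · exact h'
    · exact absurd h.symm (kkey_lt_of_deg_lt h').ne
  have : (Fintype.equivFin V u : ℕ) = (Fintype.equivFin V v : ℕ) := by
    unfold kkey at h; rw [hd] at h; omega
  exact (Fintype.equivFin V).injective (Fin.ext this)

variable (G)

/-- Lengths of key-increasing paths starting at `v`. -/
def endSet (v : V) : Set ℕ :=
  {n | ∃ (u : V) (p : G.Walk v u),
    List.Chain' (· < ·) (p.support.map (kkey G)) ∧ p.support.length = n}

/-- Length of the longest key-increasing path starting at `v`. -/
noncomputable def fh (v : V) : ℕ := sSup (endSet G v)

variable {G}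

lemma endSet_le_card {v : V} {n : ℕ} (hn : n ∈ endSet G v) : n ≤ Fintype.card V := by
  obtain ⟨u, p, hc, hl⟩ := hn
  have hnd : (p.support.map (kkey G)).Nodup :=
    ((List.isChain_iff_pairwise).mp hc).imp ne_of_lt
  have := (hnd.of_map (kkey G)).length_le_card
  omega

lemma endSet_bddAbove (v : V) : BddAbove (endSet G v) :=
  ⟨Fintype.card V, fun _ hn => endSet_le_card hn⟩

lemma one_mem_endSet (v : V) : 1 ∈ endSet G v :=
  ⟨v, SimpleGraph.Walk.nil, List.isChain_singleton _, by simp⟩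

lemma one_le_fh (v : V) : 1 ≤ fh G v :=
  le_csSup (endSet_bddAbove v) (one_mem_endSet v)

lemma fh_mem (v : V) : fh G v ∈ endSet G v :=
  Nat.sSup_mem ⟨1, one_mem_endSet v⟩ (endSet_bddAbove v)

lemma mp_bddAbove :
    BddAbove {n | ∃ (u v : V) (p : G.Walk u v),
      p.IsPath ∧ DegMonotone G p ∧ p.support.length = n} := by
  refine ⟨Fintype.card V, fun n hn => ?_⟩
  obtain ⟨u, v, p, hp, _, hl⟩ := hn
  have hnd : p.support.Nodup := (SimpleGraph.Walk.isPath_def p).mp hp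
  have := hnd.length_le_card
  omega

lemma fh_le_mp (v : V) : fh G v ≤ mp G := by
  obtain ⟨u, p, hc, hl⟩ := fh_mem v
  refine le_csSup mp_bddAbove ⟨v, u, p, ?_, ?_, hl⟩
  · rw [SimpleGraph.Walk.isPath_def]
    have hnd : (p.support.map (kkey G)).Nodup :=
      ((List.isChain_iff_pairwise).mp hc).imp ne_of_lt
    exact hnd.of_map (kkey G)
  · left
    simp only [List.Chain'] at hc ⊢
    rw [List.isChain_map] at hc ⊢
    exact hc.imp fun _ _ h => deg_le_of_kkey_lt h

lemma fh_lt_of_adj {u v : V} (h : G.Adj u v) (hk : kkey G u < kkey G v) :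
    fh G v < fh G u := by
  obtain ⟨w, p, hc, hl⟩ := fh_mem (G := G) v
  have hmem : fh G v + 1 ∈ endSet G u := by
    refine ⟨w, SimpleGraph.Walk.cons h p, ?_, by simp [hl]⟩
    rw [SimpleGraph.Walk.support_cons, List.map_cons]
    obtain ⟨t, ht⟩ : ∃ t, p.support = v :: t := ⟨_, p.support_eq_cons⟩
    rw [ht] at hc ⊢
    rw [List.map_cons] at hc ⊢
    exact List.isChain_cons_cons.mpr ⟨hk, hc⟩
  have : fh G v + 1 ≤ fh G u := le_csSup (endSet_bddAbove u) hmem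
  omega

end Aux

/-- For every finite simple graph `G` on `n` vertices, `mp(G) ≥ n / α(G)`. -/
theorem mp_ge_card_div_indepNum {V : Type*} [Fintype V] (G : SimpleGraph V) :
    (Fintype.card V : ℝ) / (_root_.indepNum G : ℝ) ≤ (mp G : ℝ) := by
  classical
  cases isEmpty_or_nonempty V with
  | inl hV =>
    simp [Fintype.card_eq_zero]
  | inr hV =>
    -- independence number is at least 1 (a singleton is independent), and sets bdd above
    have hIbdd : BddAbove {n | ∃ s : Finset V, (∀ x ∈ s, ∀ y ∈ s, ¬ G.Adj x y) ∧ s.card = n} := by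
      refine ⟨Fintype.card V, fun n hn => ?_⟩
      obtain ⟨s, _, hs⟩ := hn
      exact hs ▸ s.card_le_univ
    obtain ⟨v0⟩ := hV
    have hI1 : 1 ≤ _root_.indepNum G := by
      refine le_csSup hIbdd ⟨{v0}, ?_, by simp⟩
      intro x hx y hy
      simp only [Finset.mem_singleton] at hx hy
      subst hx; subst hy
      simp
    have hmp1 : 1 ≤ mp G := (one_le_fh v0).trans (fh_le_mp v0)
    -- fibers of fh are independent sets
    have hfiber : ∀ i : ℕ, ((Finset.univ.filter fun a => fh G a = i)).card ≤ _root_.indepNum G := by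
      intro i
      refine le_csSup hIbdd ⟨_, ?_, rfl⟩
      intro x hx y hy hadj
      simp only [Finset.mem_filter] at hx hy
      have hne : x ≠ y := hadj.ne
      have hkne : kkey G x ≠ kkey G y := fun hk => hne (kkey_injective hk)
      rcases hkne.lt_or_gt with hk | hk
      · exact absurd (hx.2.trans hy.2.symm) (fh_lt_of_adj hadj hk).ne'
      · exact absurd (hy.2.trans hx.2.symm) (fh_lt_of_adj hadj.symm hk).ne'
    -- image of fh lies in Icc 1 (mp G)
    have himg : (Finset.univ.image (fh G)) ⊆ Finset.Icc 1 (mp G) := by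
      intro i hi
      obtain ⟨v, _, hv⟩ := Finset.mem_image.mp hi
      exact Finset.mem_Icc.mpr ⟨hv ▸ one_le_fh v, hv ▸ fh_le_mp v⟩
    have hcardimg : (Finset.univ.image (fh G)).card ≤ mp G := by
      calc (Finset.univ.image (fh G)).card ≤ (Finset.Icc 1 (mp G)).card :=
            Finset.card_le_card himg
        _ = mp G := by rw [Nat.card_Icc]; omega
    have hkey : Fintype.card V ≤ mp G * _root_.indepNum G := by
      calc Fintype.card V = Finset.univ.card := rfl
        _ = ∑ i ∈ Finset.univ.image (fh G),
              ((Finset.univ.filter fun a => fh G a = i)).card :=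
            Finset.card_eq_sum_card_image (fh G) Finset.univ
        _ ≤ (Finset.univ.image (fh G)).card * _root_.indepNum G := by
            rw [← smul_eq_mul]
            exact Finset.sum_le_card_nsmul _ _ _ fun i _ => hfiber i
        _ ≤ mp G * _root_.indepNum G := Nat.mul_le_mul_right _ hcardimg
    have hIpos : (0 : ℝ) < (_root_.indepNum G : ℝ) := by exact_mod_cast hI1
    rw [div_le_iff₀ hIpos]
    exact_mod_cast hkey
end

section
/- If G is a connected graph on at least 3 vertices with mp(G) = 2 and xy is an edge with deg(x) > deg(y), then every neighbour u of y satisfies deg(u) > deg(y), and every neighbour w of x satisfies deg(w) < deg(x). -/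
open SimpleGraph

lemma no_mono_three {V : Type*} [Fintype V] (G : SimpleGraph V) (hmp : mp G = 2)
    {a b c : V} (hab : G.Adj a b) (hbc : G.Adj b c) (hac : a ≠ c)
    (h1 : gdeg G b ≤ gdeg G a) (h2 : gdeg G c ≤ gdeg G b) : False := by
  set p : G.Walk a c := Walk.cons hab (Walk.cons hbc Walk.nil) with hp
  have hsupp : p.support = [a, b, c] := rfl
  have hpath : p.IsPath := by
    rw [Walk.isPath_def, hsupp]
    simp [hab.ne, hbc.ne, hac]
  have hmono : DegMonotone G p := by
    right
    rw [hsupp]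
    simp only [List.map_cons, List.map_nil, List.isChain_cons_cons, List.isChain_singleton]
    exact .cons_cons h1 (.cons_cons h2 (.singleton _))
  have hmem : (3 : ℕ) ∈ {n | ∃ (u v : V) (q : G.Walk u v), q.IsPath ∧ DegMonotone G q ∧ q.support.length = n} :=
    ⟨a, c, p, hpath, hmono, by rw [hsupp]; rfl⟩
  have hbdd : BddAbove {n | ∃ (u v : V) (q : G.Walk u v), q.IsPath ∧ DegMonotone G q ∧ q.support.length = n} := by
    refine ⟨Fintype.card V, fun n hn => ?_⟩
    obtain ⟨u, v, q, hq, -, hlen⟩ := hn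
    rw [← hlen]
    exact hq.support_nodup.length_le_card
  have : (3 : ℕ) ≤ mp G := le_csSup hbdd hmem
  omega

/-- If `G` is connected on at least `3` vertices with `mp(G) = 2` and `xy` is an edge
with `deg(x) > deg(y)`, then every neighbour of `y` has degree `> deg(y)` and every
neighbour of `x` has degree `< deg(x)`. -/
theorem nbhd_degrees_of_mp_eq_two {V : Type*} [Fintype V] (G : SimpleGraph V)
    (hconn : G.Connected) (hcard : 3 ≤ Fintype.card V) (hmp : mp G = 2)
    (x y : V) (hxy : G.Adj x y) (hdeg : gdeg G y < gdeg G x) :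
    (∀ u, G.Adj y u → gdeg G y < gdeg G u) ∧ (∀ w, G.Adj x w → gdeg G w < gdeg G x) := by
  constructor
  · intro u hu
    by_contra h
    push_neg at h
    have hxu : x ≠ u := by
      rintro rfl; omega
    exact no_mono_three G hmp hxy hu hxu hdeg.le h
  · intro w hw
    by_contra h
    push_neg at h
    have hwy : w ≠ y := by
      rintro rfl; omega
    exact no_mono_three G hmp hw.symm hxy hwy h hdeg.le
end

section
/- A connected graph G on n ≥ 3 vertices satisfies mp(G) = 2 if and only if G is bipartite with bipartition V(G) = A ∪ B such that every vertex x ∈ A satisfies deg(x) > deg(y) for all neighbours y of x. -/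
open SimpleGraph

lemma mp_set_bdd {V : Type*} [Fintype V] (G : SimpleGraph V) :
    ∀ n ∈ {n | ∃ (u v : V) (p : G.Walk u v), p.IsPath ∧ DegMonotone G p ∧
      p.support.length = n}, n ≤ Fintype.card V := by
  rintro n ⟨u, v, p, hp, _, rfl⟩
  exact List.Nodup.length_le_card hp.support_nodup

/-- A connected graph `G` on `n ≥ 3` vertices has `mp(G) = 2` iff `G` is bipartite
with bipartition `A ∪ Aᶜ` such that every vertex of `A` has degree strictly larger
than all of its neighbours. -/
theorem mp_eq_two_iff {V : Type*} [Fintype V] (G : SimpleGraph V)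
    (hconn : G.Connected) (hcard : 3 ≤ Fintype.card V) :
    mp G = 2 ↔ ∃ A : Set V,
      (∀ x y, G.Adj x y → (x ∈ A ↔ y ∉ A)) ∧
      (∀ x ∈ A, ∀ y, G.Adj x y → gdeg G y < gdeg G x) := by
  classical
  set S := {n | ∃ (u v : V) (p : G.Walk u v), p.IsPath ∧ DegMonotone G p ∧
      p.support.length = n} with hS
  have hbdd : BddAbove S := ⟨Fintype.card V, fun n hn => mp_set_bdd G n hn⟩
  constructor
  · intro hmp
    -- key: no monotone 3-path
    have key : ∀ a b c : V, G.Adj a b → G.Adj b c → a ≠ c →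
        ¬(gdeg G a ≤ gdeg G b ∧ gdeg G b ≤ gdeg G c) := by
      rintro a b c hab hbc hac ⟨h1, h2⟩
      have h3 : (3 : ℕ) ∈ S := by
        refine ⟨a, c, Walk.cons hab (Walk.cons hbc Walk.nil), ?_, ?_, by simp⟩
        · rw [Walk.isPath_def]; simp [hab.ne, hbc.ne, hac]
        · left; simp [List.Chain', List.isChain_cons_cons, h1, h2]
      have := le_csSup hbdd h3
      rw [show sSup S = mp G from rfl, hmp] at this
      omega
    refine ⟨{x | ∀ y, G.Adj x y → gdeg G y < gdeg G x}, ?_, fun x hx y h => hx y h⟩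
    intro x y hxy
    constructor
    · intro hx hy
      exact absurd (hx y hxy) (not_lt.2 (hy x hxy.symm).le)
    · intro hy
      by_contra hx
      simp only [Set.mem_setOf_eq, not_forall] at hx hy
      obtain ⟨zx, hxzx, hzx⟩ := hx
      obtain ⟨zy, hyzy, hzy⟩ := hy
      push_neg at hzx hzy
      rcases lt_trichotomy (gdeg G x) (gdeg G y) with hlt | heq | hgt
      · -- path x - y - zy is monotone increasing
        have hne : x ≠ zy := by
          rintro rfl; exact absurd hzy (not_le.2 hlt)
        exact key x y zy hxy hyzy hne ⟨hlt.le, hzy⟩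
      · -- equal degrees; find another neighbour of x
        have hw : ∃ w, G.Adj x w ∧ w ≠ y := by
          by_contra hw
          push_neg at hw
          have hnx : G.neighborSet x = {y} := by
            apply Set.eq_singleton_iff_unique_mem.2
            exact ⟨hxy, fun w h => hw w h⟩
          have hdx : gdeg G x = 1 := by rw [gdeg, hnx, Set.ncard_singleton]
          have hdy : gdeg G y = 1 := by omega
          have hny : G.neighborSet y = {x} := by
            obtain ⟨a, ha⟩ := Set.ncard_eq_one.1 hdy
            have : x ∈ G.neighborSet y := hxy.symm
            rw [ha] at this
            obtain rfl : a = x := (Set.mem_singleton_iff.1 this).symm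
            exact ha
          have hwalk : ∀ (u z : V) (w : G.Walk u z), (u = x ∨ u = y) → (z = x ∨ z = y) := by
            intro u z w
            induction w with
            | nil => exact id
            | @cons u b z h q ih =>
              rintro (rfl | rfl)
              · have : b ∈ G.neighborSet u := h
                rw [hnx] at this
                exact ih (Or.inr this)
              · have : b ∈ G.neighborSet u := h
                rw [hny] at this
                exact ih (Or.inl this)
          have hz : ∃ z : V, z ≠ x ∧ z ≠ y := by
            by_contra hz
            push_neg at hz
            have : (Finset.univ : Finset V) ⊆ {x, y} := by
              intro z _
              rcases eq_or_ne z x with rfl | h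
              · simp
              · simp [hz z h]
            have := Finset.card_le_card this
            have h2 : ({x, y} : Finset V).card ≤ 2 := Finset.card_insert_le _ _ |>.trans (by simp)
            rw [Finset.card_univ] at this
            omega
          obtain ⟨z, hzx', hzy'⟩ := hz
          obtain ⟨w⟩ := hconn.preconnected x z
          rcases hwalk x z w (Or.inl rfl) with rfl | rfl
          · exact hzx' rfl
          · exact hzy' rfl
        obtain ⟨w, hxw, hwy⟩ := hw
        rcases le_total (gdeg G w) (gdeg G x) with hle | hle
        · exact key w x y hxw.symm hxy hwy ⟨hle, heq.le⟩
        · exact key y x w hxy.symm hxw (Ne.symm hwy) ⟨heq.ge, hle⟩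
      · -- path y - x - zx is monotone increasing
        have hne : y ≠ zx := by
          rintro rfl; exact absurd hzx (not_le.2 hgt)
        exact key y x zx hxy.symm hxzx hne ⟨hgt.le, hzx⟩
  · rintro ⟨A, hA, hdeg⟩
    have hub : ∀ n ∈ S, n ≤ 2 := by
      rintro n ⟨u, v, p, hp, hmono, rfl⟩
      match p with
      | Walk.nil => simp
      | Walk.cons h Walk.nil => simp
      | @Walk.cons _ _ u b _ h (@Walk.cons _ _ _ c _ h' q) =>
        exfalso
        have hsup : (Walk.cons h (Walk.cons h' q)).support.map (gdeg G)
            = gdeg G u :: gdeg G b :: gdeg G c :: (q.support.tail.map (gdeg G)) := by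
          rw [Walk.support_cons, Walk.support_cons, Walk.support_eq_cons q]
          simp
          cases q <;> simp
        rcases hmono with hm | hm <;> rw [hsup] at hm <;>
          rw [List.Chain', List.isChain_cons_cons, List.isChain_cons_cons] at hm <;>
          obtain ⟨h1, h2, -⟩ := hm
        · by_cases hu : u ∈ A
          · exact absurd (hdeg u hu b h) (not_lt.2 h1)
          · have hb : b ∈ A := not_not.1 (fun hb => hu ((hA u b h).2 hb))
            exact absurd (hdeg b hb c h') (not_lt.2 h2)
        · by_cases hb : b ∈ A
          · exact absurd (hdeg b hb u h.symm) (not_lt.2 h1)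
          · have hc : c ∈ A := not_not.1 (fun hc => hb ((hA b c h').2 hc))
            exact absurd (hdeg c hc b h'.symm) (not_lt.2 h2)
    have h2 : (2 : ℕ) ∈ S := by
      obtain ⟨x⟩ := (Fintype.card_pos_iff.1 (by omega) : Nonempty V)
      obtain ⟨z, hz⟩ := Fintype.exists_ne_of_one_lt_card (by omega) x
      obtain ⟨w⟩ := hconn.preconnected x z
      have hadj : ∃ y, G.Adj x y := by
        cases w with
        | nil => exact absurd rfl hz.symm  -- z = x case handled below
        | cons h _ => exact ⟨_, h⟩
      obtain ⟨y, hxy⟩ := hadj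
      refine ⟨x, y, Walk.cons hxy Walk.nil, ?_, ?_, by simp⟩
      · rw [Walk.isPath_def]; simp [hxy.ne]
      · rcases le_total (gdeg G x) (gdeg G y) with hle | hle
        · left; simp [List.Chain', List.isChain_cons_cons, hle]
        · right; simp [List.Chain', List.isChain_cons_cons, hle]
    exact le_antisymm (csSup_le ⟨2, h2⟩ hub) (le_csSup ⟨2, hub⟩ h2)
end

section
/- Every maximal outerplanar graph G on n ≥ 6 vertices satisfies 4 ≤ mp(G) ≤ n − 1. -/
open SimpleGraph

/-- `IsMOP G`: `G` on `Fin n` is a triangulated polygon on the Hamiltonian cycle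
`0 - 1 - ⋯ - (n-1) - 0`: it contains all cycle edges, no two of its edges cross,
and it has `2n - 3` edges (so all its inner faces are triangles). Every maximal
outerplanar graph on `n ≥ 3` vertices is isomorphic to such a graph. -/
structure IsMOP {n : ℕ} (G : SimpleGraph (Fin n)) : Prop where
  three_le : 3 ≤ n
  cycle : ∀ i j : Fin n, (j : ℕ) = ((i : ℕ) + 1) % n → G.Adj i j
  noncross : ∀ a b c d : Fin n, a < b → b < c → c < d → G.Adj a c → G.Adj b d → False
  card_edges : G.edgeSet.ncard = 2 * n - 3


/-- An abstract "chord system": the chords of a triangulated polygon on `n`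
vertices, in linear coordinates, together with a degree function. -/
structure CSys (n : ℕ) where
  D : Finset (ℕ × ℕ)
  dg : ℕ → ℕ
  hmem : ∀ c ∈ D, c.1 + 2 ≤ c.2 ∧ c.2 + 1 ≤ n ∧ ¬(c.1 = 0 ∧ c.2 + 1 = n)
  hnc : ∀ c ∈ D, ∀ c' ∈ D, ¬(c.1 < c'.1 ∧ c'.1 < c.2 ∧ c.2 < c'.2)
  hcard : D.card + 3 = n
  hdeg : ∀ x, x < n → dg x = 2 + (D.filter (fun c => c.1 = x ∨ c.2 = x)).card
  hn : 6 ≤ n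

namespace CSys

variable {n : ℕ} (S : CSys n)

/-- chords lying within the interval `[a,b]`. -/
def w (a b : ℕ) : Finset (ℕ × ℕ) := S.D.filter (fun c => a ≤ c.1 ∧ c.2 ≤ b)

/-- chords lying strictly inside the region bounded by `(a,b)`. -/
def din (a b : ℕ) : Finset (ℕ × ℕ) :=
  S.D.filter (fun c => a ≤ c.1 ∧ c.2 ≤ b ∧ ¬(c.1 = a ∧ c.2 = b))

lemma mem_w {a b : ℕ} {c : ℕ × ℕ} : c ∈ S.w a b ↔ c ∈ S.D ∧ a ≤ c.1 ∧ c.2 ≤ b := by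
  simp [w]

lemma mem_din {a b : ℕ} {c : ℕ × ℕ} :
    c ∈ S.din a b ↔ c ∈ S.D ∧ a ≤ c.1 ∧ c.2 ≤ b ∧ ¬(c.1 = a ∧ c.2 = b) := by
  simp [din, and_assoc]

lemma din_subset_w {a b : ℕ} : S.din a b ⊆ S.w a b := by
  intro c hc
  rw [mem_din] at hc
  rw [mem_w]
  exact ⟨hc.1, hc.2.1, hc.2.2.1⟩

lemma w_subset_insert {a b : ℕ} : S.w a b ⊆ insert (a, b) (S.din a b) := by
  intro c hc
  rw [S.mem_w] at hc
  by_cases h : c = (a, b)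
  · subst h; exact Finset.mem_insert_self _ _
  · refine Finset.mem_insert_of_mem ?_
    rw [S.mem_din]
    refine ⟨hc.1, hc.2.1, hc.2.2, ?_⟩
    intro hh
    exact h (Prod.ext hh.1 hh.2)

lemma not_mem_din_self {a b : ℕ} : (a, b) ∉ S.din a b := by
  rw [mem_din]; simp

lemma w_eq_insert {a b : ℕ} (hab : (a, b) ∈ S.D) (h2 : a + 2 ≤ b) :
    S.w a b = insert (a, b) (S.din a b) := by
  apply Finset.Subset.antisymm S.w_subset_insert
  intro c hc
  rcases Finset.mem_insert.mp hc with h | h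
  · subst h; rw [mem_w]; exact ⟨hab, le_refl _, le_refl _⟩
  · exact S.din_subset_w h

lemma w_card_of_mem {a b : ℕ} (hab : (a, b) ∈ S.D) (h2 : a + 2 ≤ b) :
    (S.w a b).card = (S.din a b).card + 1 := by
  rw [S.w_eq_insert hab h2, Finset.card_insert_of_notMem S.not_mem_din_self]

/-- decomposition along a maximal-gap chord -/
lemma decomp {a b x y : ℕ} (hxy : (x, y) ∈ S.din a b)
    (hmax : ∀ c ∈ S.din a b, c.2 - c.1 ≤ y - x) :
    S.din a b ⊆ insert (x, y) (S.w a x ∪ (S.din x y ∪ S.w y b)) := by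
  have hxyD := (S.mem_din.mp hxy).1
  have hxymem := S.hmem _ hxyD
  have hxybd := S.mem_din.mp hxy
  intro c hc
  by_cases hcx : c = (x, y)
  · subst hcx; exact Finset.mem_insert_self _ _
  refine Finset.mem_insert_of_mem ?_
  have hcd := S.mem_din.mp hc
  have hcm := S.hmem _ hcd.1
  have hnc1 := S.hnc _ hcd.1 _ hxyD
  have hnc2 := S.hnc _ hxyD _ hcd.1
  have hgap := hmax _ hc
  have hne : ¬(c.1 = x ∧ c.2 = y) := by
    intro hh; exact hcx (Prod.ext hh.1 hh.2)
  -- trichotomy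
  have htri : c.2 ≤ x ∨ y ≤ c.1 ∨ (x ≤ c.1 ∧ c.2 ≤ y ∧ ¬(c.1 = x ∧ c.2 = y)) := by
    omega
  rcases htri with h | h | h
  · exact Finset.mem_union_left _ (S.mem_w.mpr ⟨hcd.1, hcd.2.1, h⟩)
  · exact Finset.mem_union_right _ (Finset.mem_union_right _
      (S.mem_w.mpr ⟨hcd.1, h, hcd.2.2.1⟩))
  · exact Finset.mem_union_right _ (Finset.mem_union_left _
      (S.mem_din.mpr ⟨hcd.1, h.1, h.2.1, h.2.2⟩))

lemma card_bounds : ∀ (m a b : ℕ), b ≤ a + m →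
    (S.din a b).card ≤ b - a - 2 ∧ (S.w a b).card ≤ b - a - 1 := by
  intro m
  induction m using Nat.strong_induction_on with
  | _ m IH =>
    intro a b hm
    have hdin : (S.din a b).card ≤ b - a - 2 := by
      by_cases hne : (S.din a b).Nonempty
      · obtain ⟨⟨x, y⟩, hxy, hmax⟩ := Finset.exists_max_image (S.din a b)
          (fun c => c.2 - c.1) hne
        have hxyd := S.mem_din.mp hxy
        have hxym := S.hmem _ hxyd.1
        have hsub := S.decomp hxy hmax
        have hcard : (S.din a b).card ≤
            1 + ((S.w a x).card + ((S.din x y).card + (S.w y b).card)) := by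
          calc (S.din a b).card ≤ (insert (x, y) (S.w a x ∪ (S.din x y ∪ S.w y b))).card :=
                Finset.card_le_card hsub
            _ ≤ (S.w a x ∪ (S.din x y ∪ S.w y b)).card + 1 := Finset.card_insert_le _ _
            _ ≤ ((S.w a x).card + (S.din x y ∪ S.w y b).card) + 1 := by
                have := Finset.card_union_le (S.w a x) (S.din x y ∪ S.w y b)
                omega
            _ ≤ ((S.w a x).card + ((S.din x y).card + (S.w y b).card)) + 1 := by
                have := Finset.card_union_le (S.din x y) (S.w y b)
                omega
            _ = _ := by omega
        -- bounds on pieces by induction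
        have h1 : a ≤ x := hxyd.2.1
        have h2 : x + 2 ≤ y := hxym.1
        have h3 : y ≤ b := hxyd.2.2.1
        have h4 : ¬(x = a ∧ y = b) := hxyd.2.2.2
        have hwax : (S.w a x).card ≤ x - a - 1 := (IH (x - a) (by omega) a x (by omega)).2
        have hdxy : (S.din x y).card ≤ y - x - 2 := (IH (y - x) (by omega) x y (by omega)).1
        have hwyb : (S.w y b).card ≤ b - y - 1 := (IH (b - y) (by omega) y b (by omega)).2
        omega
      · rw [Finset.not_nonempty_iff_eq_empty] at hne
        rw [hne]; simp
    refine ⟨hdin, ?_⟩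
    by_cases h2 : a + 2 ≤ b
    · have := Finset.card_le_card (S.w_subset_insert (a := a) (b := b))
      have := Finset.card_insert_le (a, b) (S.din a b)
      omega
    · have : S.w a b = ∅ := by
        rw [Finset.eq_empty_iff_forall_notMem]
        intro c hc
        have hcw := S.mem_w.mp hc
        have := S.hmem _ hcw.1
        omega
      rw [this]; simp

lemma din_card_le {a b : ℕ} : (S.din a b).card ≤ b - a - 2 :=
  (S.card_bounds (b - a) a b (by omega)).1

lemma w_card_le {a b : ℕ} : (S.w a b).card ≤ b - a - 1 :=
  (S.card_bounds (b - a) a b (by omega)).2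

lemma chord_of_w_full {a b : ℕ} (h2 : a + 2 ≤ b) (hful : b - a - 1 ≤ (S.w a b).card) :
    (a, b) ∈ S.D ∧ (S.din a b).card = b - a - 2 := by
  have hle := S.din_card_le (a := a) (b := b)
  have hwle := S.w_card_le (a := a) (b := b)
  by_cases hD : (a, b) ∈ S.D
  · have := S.w_card_of_mem hD h2
    exact ⟨hD, by omega⟩
  · exfalso
    have hsub : S.w a b ⊆ S.din a b := by
      intro c hc
      have hcw := S.mem_w.mp hc
      refine S.mem_din.mpr ⟨hcw.1, hcw.2.1, hcw.2.2, ?_⟩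
      intro hh
      exact hD (by rcases c with ⟨c1, c2⟩; simp only at hh; rw [← hh.1, ← hh.2]; exact hcw.1)
    have := Finset.card_le_card hsub
    omega

/-- Splitting a fully triangulated region at the apex of its bounding triangle. -/
lemma full_split {a b : ℕ} (hfull : (S.din a b).card + 2 = b - a) (h3 : a + 3 ≤ b) :
    ∃ t, a < t ∧ t < b ∧ ((a, t) ∈ S.D ∨ t = a + 1) ∧ ((t, b) ∈ S.D ∨ t + 1 = b) ∧
      (S.din a t).card = t - a - 2 ∧ (S.din t b).card = b - t - 2 := by
  have hne : (S.din a b).Nonempty := by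
    rw [← Finset.card_pos]; omega
  obtain ⟨⟨x, y⟩, hxy, hmax⟩ := Finset.exists_max_image (S.din a b) (fun c => c.2 - c.1) hne
  have hxyd := S.mem_din.mp hxy
  have hxym := S.hmem _ hxyd.1
  have h1 : a ≤ x := hxyd.2.1
  have h2 : x + 2 ≤ y := hxym.1
  have h3' : y ≤ b := hxyd.2.2.1
  have h4 : ¬(x = a ∧ y = b) := hxyd.2.2.2
  have hsub := S.decomp hxy hmax
  have hcard : (S.din a b).card ≤
      1 + ((S.w a x).card + ((S.din x y).card + (S.w y b).card)) := by
    calc (S.din a b).card ≤ (insert (x, y) (S.w a x ∪ (S.din x y ∪ S.w y b))).card :=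
          Finset.card_le_card hsub
      _ ≤ (S.w a x ∪ (S.din x y ∪ S.w y b)).card + 1 := Finset.card_insert_le _ _
      _ ≤ ((S.w a x).card + (S.din x y ∪ S.w y b).card) + 1 := by
          have := Finset.card_union_le (S.w a x) (S.din x y ∪ S.w y b)
          omega
      _ ≤ ((S.w a x).card + ((S.din x y).card + (S.w y b).card)) + 1 := by
          have := Finset.card_union_le (S.din x y) (S.w y b)
          omega
      _ = _ := by omega
  have hwax := S.w_card_le (a := a) (b := x)
  have hdxy := S.din_card_le (a := x) (b := y)
  have hwyb := S.w_card_le (a := y) (b := b)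
  by_cases hxa : x = a
  · subst hxa
    -- t = y
    have hyb : y < b := by omega
    refine ⟨y, by omega, hyb, Or.inl hxyd.1, ?_, ?_, ?_⟩
    · -- (y,b) ∈ D or y+1 = b
      by_cases hy1 : y + 1 = b
      · exact Or.inr hy1
      · left
        have : b - y - 1 ≤ (S.w y b).card := by omega
        exact (S.chord_of_w_full (by omega) this).1
    · -- din x y full
      omega
    · -- din y b full
      by_cases hy1 : y + 1 = b
      · have := S.din_card_le (a := y) (b := b); omega
      · have : b - y - 1 ≤ (S.w y b).card := by omega
        exact (S.chord_of_w_full (by omega) this).2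
  · by_cases hyb : y = b
    · subst hyb
      -- t = x
      refine ⟨x, by omega, by omega, ?_, Or.inl hxyd.1, ?_, ?_⟩
      · by_cases hx1 : x = a + 1
        · exact Or.inr hx1
        · left
          have : x - a - 1 ≤ (S.w a x).card := by omega
          exact (S.chord_of_w_full (by omega) this).1
      · by_cases hx1 : x = a + 1
        · have := S.din_card_le (a := a) (b := x); omega
        · have : x - a - 1 ≤ (S.w a x).card := by omega
          exact (S.chord_of_w_full (by omega) this).2
      · omega
    · exfalso; omega

/-- In a fully triangulated region there is an interior point free of chords. -/
lemma free_point : ∀ (m a b : ℕ), b ≤ a + m → (S.din a b).card + 2 = b - a → a + 2 ≤ b →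
    ∃ c, a < c ∧ c < b ∧ ∀ e ∈ S.D, a ≤ e.1 → e.2 ≤ b → e.1 ≠ c ∧ e.2 ≠ c := by
  intro m
  induction m using Nat.strong_induction_on with
  | _ m IH =>
    intro a b hm hfull h2
    by_cases h3 : a + 3 ≤ b
    · obtain ⟨t, hat, htb, hD1, hD2, hf1, hf2⟩ := S.full_split hfull h3
      by_cases hta : a + 2 ≤ t
      · have hDat : (a, t) ∈ S.D := hD1.resolve_right (by omega)
        obtain ⟨c, hc1, hc2, hfree⟩ := IH (t - a) (by omega) a t (by omega) (by omega) hta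
        refine ⟨c, hc1, by omega, ?_⟩
        intro e he ha hb
        by_cases het : e.2 ≤ t
        · exact hfree e he ha het
        · constructor
          · intro hec
            exact (S.hnc _ hDat _ he) (by dsimp only; omega)
          · intro hec; omega
      · have ht1 : t = a + 1 := by omega
        have htb2 : t + 2 ≤ b := by omega
        have hDtb : (t, b) ∈ S.D := hD2.resolve_right (by omega)
        obtain ⟨c, hc1, hc2, hfree⟩ := IH (b - t) (by omega) t b (by omega) (by omega) htb2
        refine ⟨c, by omega, hc2, ?_⟩
        intro e he ha hb
        by_cases het : t ≤ e.1
        · exact hfree e he het hb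
        · have hem := S.hmem _ he
          have he1 : e.1 = a := by omega
          constructor
          · intro hec; omega
          · intro hec
            exact (S.hnc _ he _ hDtb) (by dsimp only; omega)
    · -- b = a + 2
      refine ⟨a + 1, by omega, by omega, ?_⟩
      intro e he ha hb
      have := S.hmem _ he
      omega

lemma no_touch_of_dg_two {x : ℕ} (hx : x < n) (h : S.dg x = 2) :
    ∀ e ∈ S.D, e.1 ≠ x ∧ e.2 ≠ x := by
  rw [S.hdeg x hx] at h
  have hcard : (S.D.filter (fun c => c.1 = x ∨ c.2 = x)).card = 0 := by omega
  rw [Finset.card_eq_zero] at hcard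
  intro e he
  constructor <;> intro hh
  · have : e ∈ S.D.filter (fun c => c.1 = x ∨ c.2 = x) :=
      Finset.mem_filter.mpr ⟨he, Or.inl hh⟩
    rw [hcard] at this; simp at this
  · have : e ∈ S.D.filter (fun c => c.1 = x ∨ c.2 = x) :=
      Finset.mem_filter.mpr ⟨he, Or.inr hh⟩
    rw [hcard] at this; simp at this

lemma dg_two_of_no_touch {x : ℕ} (hx : x < n) (h : ∀ e ∈ S.D, e.1 ≠ x ∧ e.2 ≠ x) :
    S.dg x = 2 := by
  rw [S.hdeg x hx]
  have : S.D.filter (fun c => c.1 = x ∨ c.2 = x) = ∅ := by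
    rw [Finset.filter_eq_empty_iff]
    intro e he
    have := h e he
    tauto
  rw [this]; simp

lemma exists_ear : ∃ e, e < n ∧ S.dg e = 2 := by
  have hne : S.D.Nonempty := by
    rw [← Finset.card_pos]
    have := S.hcard; have := S.hn; omega
  obtain ⟨⟨p, q⟩, hpq, hmin⟩ := Finset.exists_min_image S.D (fun c => c.2 - c.1) hne
  have hm := S.hmem _ hpq
  have hq : q + 1 ≤ n := hm.2.1
  refine ⟨p + 1, by omega, S.dg_two_of_no_touch (by omega) ?_⟩
  intro e he
  have hem := S.hmem _ he
  have h1 : ¬(p < e.1 ∧ e.1 < q ∧ q < e.2) := S.hnc _ hpq _ he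
  have h2 : ¬(e.1 < p ∧ p < e.2 ∧ e.2 < q) := S.hnc _ he _ hpq
  have hg := hmin _ he
  simp only at hg
  constructor <;> intro hh <;> omega

lemma ear0 (h0 : S.dg 0 = 2) : (1, n - 1) ∈ S.D ∧ (S.din 1 (n - 1)).card + 4 = n := by
  have hn6 := S.hn
  have hfree := S.no_touch_of_dg_two (by omega) h0
  have hDw : S.D = S.w 1 (n - 1) := by
    apply Finset.Subset.antisymm
    · intro c hc
      have h1 := hfree c hc
      have h2 := S.hmem _ hc
      exact S.mem_w.mpr ⟨hc, by omega, by omega⟩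
    · exact Finset.filter_subset _ _
  have hwcard : (S.w 1 (n - 1)).card + 3 = n := by rw [← hDw]; exact S.hcard
  have hfull := S.chord_of_w_full (a := 1) (b := n - 1) (by omega) (by omega)
  exact ⟨hfull.1, by omega⟩

lemma no_two_ears (h0 : S.dg 0 = 2) (h1 : S.dg (n - 1) = 2) : False := by
  have hn6 := S.hn
  have f0 := S.no_touch_of_dg_two (by omega) h0
  have f1 := S.no_touch_of_dg_two (by omega) h1
  have hDw : S.D ⊆ S.w 1 (n - 2) := by
    intro c hc
    have ha := S.hmem _ hc
    have hb := f0 c hc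
    have hcc := f1 c hc
    exact S.mem_w.mpr ⟨hc, by omega, by omega⟩
  have := Finset.card_le_card hDw
  have := S.w_card_le (a := 1) (b := n - 2)
  have := S.hcard
  omega

lemma second_ear (h0 : S.dg 0 = 2) : ∃ c, 0 < c ∧ c < n - 1 ∧ S.dg c = 2 := by
  have hn6 := S.hn
  obtain ⟨hD, hful⟩ := S.ear0 h0
  obtain ⟨c, hc1, hc2, hfree⟩ := S.free_point n 1 (n - 1) (by omega) (by omega) (by omega)
  have hfree0 := S.no_touch_of_dg_two (by omega) h0
  refine ⟨c, by omega, hc2, S.dg_two_of_no_touch (by omega) ?_⟩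
  intro e he
  have hem := S.hmem _ he
  have h1 := hfree0 e he
  exact hfree e he (by omega) (by omega)

/-- abstract adjacency of the polygon triangulation -/
def adjS (x y : ℕ) : Prop :=
  (x, y) ∈ S.D ∨ (y, x) ∈ S.D ∨ x + 1 = y ∨ y + 1 = x ∨
    (x = 0 ∧ y + 1 = n) ∨ (y = 0 ∧ x + 1 = n)

/-- a monotone 4-vertex path, abstractly -/
def Quad : Prop :=
  ∃ q1 q2 q3 q4 : ℕ, q1 < n ∧ q2 < n ∧ q3 < n ∧ q4 < n ∧
    q1 ≠ q2 ∧ q1 ≠ q3 ∧ q1 ≠ q4 ∧ q2 ≠ q3 ∧ q2 ≠ q4 ∧ q3 ≠ q4 ∧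
    S.adjS q1 q2 ∧ S.adjS q2 q3 ∧ S.adjS q3 q4 ∧
    S.dg q1 ≤ S.dg q2 ∧ S.dg q2 ≤ S.dg q3 ∧ S.dg q3 ≤ S.dg q4

lemma dg_formula {a b v : ℕ} (hab : (a, b) ∈ S.D) (h1 : a < v) (h2 : v < b) (hv : v < n) :
    S.dg v = 2 + ((S.w a b).filter (fun c => c.1 = v ∨ c.2 = v)).card := by
  rw [S.hdeg v hv]
  congr 2
  ext c
  simp only [Finset.mem_filter]
  constructor
  · rintro ⟨hc, ht⟩
    have hcm := S.hmem _ hc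
    have hn1 : ¬(a < c.1 ∧ c.1 < b ∧ b < c.2) := S.hnc _ hab _ hc
    have hn2 : ¬(c.1 < a ∧ a < c.2 ∧ c.2 < b) := S.hnc _ hc _ hab
    refine ⟨S.mem_w.mpr ⟨hc, ?_, ?_⟩, ht⟩ <;> rcases ht with h | h <;> omega
  · rintro ⟨hc, ht⟩
    exact ⟨(S.mem_w.mp hc).1, ht⟩

lemma dg_ge_one_chord {x : ℕ} (hx : x < n) {c : ℕ × ℕ} (hc : c ∈ S.D)
    (ht : c.1 = x ∨ c.2 = x) : 3 ≤ S.dg x := by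
  rw [S.hdeg x hx]
  have hmem : c ∈ S.D.filter (fun c => c.1 = x ∨ c.2 = x) := Finset.mem_filter.mpr ⟨hc, ht⟩
  have := Finset.card_pos.mpr ⟨c, hmem⟩
  omega

lemma dg_ge_two_chords {x : ℕ} (hx : x < n) {c c' : ℕ × ℕ} (hc : c ∈ S.D) (hc' : c' ∈ S.D)
    (hne : c ≠ c') (ht : c.1 = x ∨ c.2 = x) (ht' : c'.1 = x ∨ c'.2 = x) : 4 ≤ S.dg x := by
  rw [S.hdeg x hx]
  have hsub : ({c, c'} : Finset (ℕ × ℕ)) ⊆ S.D.filter (fun c => c.1 = x ∨ c.2 = x) := by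
    intro e he
    rcases Finset.mem_insert.mp he with h | h
    · subst h; exact Finset.mem_filter.mpr ⟨hc, ht⟩
    · rw [Finset.mem_singleton] at h; subst h; exact Finset.mem_filter.mpr ⟨hc', ht'⟩
  have := Finset.card_le_card hsub
  rw [Finset.card_pair hne] at this
  omega

lemma eq_singleton_of_mem_card_one {α : Type*} {s : Finset α} {x : α} (h : x ∈ s)
    (hc : s.card = 1) : s = {x} := by
  obtain ⟨y, hy⟩ := Finset.card_eq_one.mp hc
  subst hy
  rw [Finset.mem_singleton] at h
  subst h; rfl

lemma reg : ∀ (m a b : ℕ), b ≤ a + m → 1 ≤ a → b + 1 ≤ n → (a, b) ∈ S.D →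
    (S.din a b).card + 2 = b - a → a + 3 ≤ b → S.Quad := by
  intro m
  induction m using Nat.strong_induction_on with
  | _ m IH =>
    intro a b hm ha hb hab hfull h3
    obtain ⟨t, hat, htb, hD1, hD2, hf1, hf2⟩ := S.full_split (by omega) h3
    by_cases hL : a + 3 ≤ t
    · exact IH (t - a) (by omega) a t (by omega) ha (by omega)
        (hD1.resolve_right (by omega)) (by omega) hL
    by_cases hR : t + 3 ≤ b
    · exact IH (b - t) (by omega) t b (by omega) (by omega) hb
        (hD2.resolve_right (by omega)) (by omega) hR
    have hcases : (t = a + 1 ∧ b = a + 3) ∨ (t = a + 2 ∧ b = a + 3) ∨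
        (t = a + 2 ∧ b = a + 4) := by omega
    rcases hcases with ⟨ht, hbb⟩ | ⟨ht, hbb⟩ | ⟨ht, hbb⟩
    · -- chord (a+1, a+3), b = a+3
      have htb' : (a + 1, b) ∈ S.D := by
        have := hD2.resolve_right (by omega); rwa [ht] at this
      have hdin : S.din a b = {(a + 1, b)} := by
        apply eq_singleton_of_mem_card_one
        · exact S.mem_din.mpr ⟨htb', by omega, le_refl _, by omega⟩
        · omega
      have hW : S.w a b = insert (a, b) {(a + 1, b)} := by
        rw [S.w_eq_insert hab (by omega), hdin]
      have hd2 : S.dg (a + 2) = 2 := by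
        rw [S.dg_formula hab (by omega) (by omega) (by omega), hW]
        have : (insert (a, b) {(a + 1, b)} : Finset (ℕ × ℕ)).filter
            (fun c => c.1 = a + 2 ∨ c.2 = a + 2) = ∅ := by
          rw [Finset.filter_eq_empty_iff]
          intro c hc
          rcases Finset.mem_insert.mp hc with h | h
          · rw [h]; dsimp only; omega
          · rw [Finset.mem_singleton] at h; rw [h]; dsimp only; omega
        rw [this]; simp
      have hd1 : S.dg (a + 1) = 3 := by
        rw [S.dg_formula hab (by omega) (by omega) (by omega), hW]
        have : (insert (a, b) {(a + 1, b)} : Finset (ℕ × ℕ)).filter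
            (fun c => c.1 = a + 1 ∨ c.2 = a + 1) = {(a + 1, b)} := by
          ext ⟨c1, c2⟩
          simp only [Finset.mem_filter, Finset.mem_insert, Finset.mem_singleton,
            Prod.mk.injEq]
          omega
        rw [this]; simp
      have hda : 3 ≤ S.dg a := S.dg_ge_one_chord (by omega) hab (Or.inl rfl)
      have hdb : 3 ≤ S.dg b := S.dg_ge_one_chord (by omega) hab (Or.inr rfl)
      by_cases hcmp : S.dg a ≤ S.dg b
      · exact ⟨a + 2, a + 1, a, b, by omega, by omega, by omega, by omega,
          by omega, by omega, by omega, by omega, by omega, by omega,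
          Or.inr (Or.inr (Or.inr (Or.inl rfl))), Or.inr (Or.inr (Or.inr (Or.inl rfl))),
          Or.inl hab, by omega, by omega, hcmp⟩
      · exact ⟨a + 2, a + 1, b, a, by omega, by omega, by omega, by omega,
          by omega, by omega, by omega, by omega, by omega, by omega,
          Or.inr (Or.inr (Or.inr (Or.inl rfl))), Or.inl htb',
          Or.inr (Or.inl hab), by omega, by omega, by omega⟩
    · -- chord (a, a+2), b = a+3
      have hta' : (a, a + 2) ∈ S.D := by
        have := hD1.resolve_right (by omega); rwa [ht] at this
      have hdin : S.din a b = {(a, a + 2)} := by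
        apply eq_singleton_of_mem_card_one
        · exact S.mem_din.mpr ⟨hta', le_refl _, by omega, by omega⟩
        · omega
      have hW : S.w a b = insert (a, b) {(a, a + 2)} := by
        rw [S.w_eq_insert hab (by omega), hdin]
      have hd1 : S.dg (a + 1) = 2 := by
        rw [S.dg_formula hab (by omega) (by omega) (by omega), hW]
        have : (insert (a, b) {(a, a + 2)} : Finset (ℕ × ℕ)).filter
            (fun c => c.1 = a + 1 ∨ c.2 = a + 1) = ∅ := by
          rw [Finset.filter_eq_empty_iff]
          intro c hc
          rcases Finset.mem_insert.mp hc with h | h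
          · rw [h]; dsimp only; omega
          · rw [Finset.mem_singleton] at h; rw [h]; dsimp only; omega
        rw [this]; simp
      have hd2 : S.dg (a + 2) = 3 := by
        rw [S.dg_formula hab (by omega) (by omega) (by omega), hW]
        have : (insert (a, b) {(a, a + 2)} : Finset (ℕ × ℕ)).filter
            (fun c => c.1 = a + 2 ∨ c.2 = a + 2) = {(a, a + 2)} := by
          ext ⟨c1, c2⟩
          simp only [Finset.mem_filter, Finset.mem_insert, Finset.mem_singleton,
            Prod.mk.injEq]
          omega
        rw [this]; simp
      have hda : 3 ≤ S.dg a := S.dg_ge_one_chord (by omega) hab (Or.inl rfl)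
      have hdb : 3 ≤ S.dg b := S.dg_ge_one_chord (by omega) hab (Or.inr rfl)
      by_cases hcmp : S.dg a ≤ S.dg b
      · exact ⟨a + 1, a + 2, a, b, by omega, by omega, by omega, by omega,
          by omega, by omega, by omega, by omega, by omega, by omega,
          Or.inr (Or.inr (Or.inl rfl)), Or.inr (Or.inl hta'),
          Or.inl hab, by omega, by omega, hcmp⟩
      · exact ⟨a + 1, a + 2, b, a, by omega, by omega, by omega, by omega,
          by omega, by omega, by omega, by omega, by omega, by omega,
          Or.inr (Or.inr (Or.inl rfl)), Or.inr (Or.inr (Or.inl (by omega))),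
          Or.inr (Or.inl hab), by omega, by omega, by omega⟩
    · -- chords (a, a+2) and (a+2, a+4), b = a+4
      have hta' : (a, a + 2) ∈ S.D := by
        have := hD1.resolve_right (by omega); rwa [ht] at this
      have htb' : (a + 2, b) ∈ S.D := by
        have := hD2.resolve_right (by omega); rwa [ht] at this
      have hpair_ne : ((a, a + 2) : ℕ × ℕ) ≠ (a + 2, b) := by
        intro h; rw [Prod.mk.injEq] at h; omega
      have hdin : S.din a b = {(a, a + 2), (a + 2, b)} := by
        have hsub : ({(a, a + 2), (a + 2, b)} : Finset (ℕ × ℕ)) ⊆ S.din a b := by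
          intro c hc
          rcases Finset.mem_insert.mp hc with h | h
          · rw [h]; exact S.mem_din.mpr ⟨hta', le_refl _, by omega, by omega⟩
          · rw [Finset.mem_singleton] at h; rw [h]
            exact S.mem_din.mpr ⟨htb', by omega, le_refl _, by omega⟩
        have hcard2 : ({(a, a + 2), (a + 2, b)} : Finset (ℕ × ℕ)).card = 2 :=
          Finset.card_pair hpair_ne
        exact (Finset.eq_of_subset_of_card_le hsub (by omega)).symm
      have hW : S.w a b = insert (a, b) {(a, a + 2), (a + 2, b)} := by
        rw [S.w_eq_insert hab (by omega), hdin]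
      have hd1 : S.dg (a + 1) = 2 := by
        rw [S.dg_formula hab (by omega) (by omega) (by omega), hW]
        have : (insert (a, b) {(a, a + 2), (a + 2, b)} : Finset (ℕ × ℕ)).filter
            (fun c => c.1 = a + 1 ∨ c.2 = a + 1) = ∅ := by
          rw [Finset.filter_eq_empty_iff]
          intro c hc
          rcases Finset.mem_insert.mp hc with h | h
          · rw [h]; dsimp only; omega
          · rcases Finset.mem_insert.mp h with h' | h'
            · rw [h']; dsimp only; omega
            · rw [Finset.mem_singleton] at h'; rw [h']; dsimp only; omega
        rw [this]; simp
      have hd3 : S.dg (a + 3) = 2 := by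
        rw [S.dg_formula hab (by omega) (by omega) (by omega), hW]
        have : (insert (a, b) {(a, a + 2), (a + 2, b)} : Finset (ℕ × ℕ)).filter
            (fun c => c.1 = a + 3 ∨ c.2 = a + 3) = ∅ := by
          rw [Finset.filter_eq_empty_iff]
          intro c hc
          rcases Finset.mem_insert.mp hc with h | h
          · rw [h]; dsimp only; omega
          · rcases Finset.mem_insert.mp h with h' | h'
            · rw [h']; dsimp only; omega
            · rw [Finset.mem_singleton] at h'; rw [h']; dsimp only; omega
        rw [this]; simp
      have hd2 : S.dg (a + 2) = 4 := by
        rw [S.dg_formula hab (by omega) (by omega) (by omega), hW]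
        have : (insert (a, b) {(a, a + 2), (a + 2, b)} : Finset (ℕ × ℕ)).filter
            (fun c => c.1 = a + 2 ∨ c.2 = a + 2) = {(a, a + 2), (a + 2, b)} := by
          ext ⟨c1, c2⟩
          simp only [Finset.mem_filter, Finset.mem_insert, Finset.mem_singleton,
            Prod.mk.injEq]
          omega
        rw [this, Finset.card_pair hpair_ne]
      have hda : 4 ≤ S.dg a := S.dg_ge_two_chords (by omega) hab hta'
        (by intro h; rw [Prod.mk.injEq] at h; omega) (Or.inl rfl) (Or.inl rfl)
      have hdb : 4 ≤ S.dg b := S.dg_ge_two_chords (by omega) hab htb'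
        (by intro h; rw [Prod.mk.injEq] at h; omega) (Or.inr rfl) (Or.inr rfl)
      by_cases hcmp : S.dg a ≤ S.dg b
      · exact ⟨a + 1, a + 2, a, b, by omega, by omega, by omega, by omega,
          by omega, by omega, by omega, by omega, by omega, by omega,
          Or.inr (Or.inr (Or.inl rfl)), Or.inr (Or.inl hta'),
          Or.inl hab, by omega, by omega, hcmp⟩
      · exact ⟨a + 3, a + 2, b, a, by omega, by omega, by omega, by omega,
          by omega, by omega, by omega, by omega, by omega, by omega,
          Or.inr (Or.inr (Or.inr (Or.inl rfl))), Or.inl htb',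
          Or.inr (Or.inl hab), by omega, by omega, by omega⟩

lemma quad_exists (h0 : S.dg 0 = 2) : S.Quad := by
  have hn6 := S.hn
  obtain ⟨hD, hful⟩ := S.ear0 h0
  exact S.reg n 1 (n - 1) (by omega) (le_refl _) (by omega) hD (by omega) (by omega)

end CSys

open SimpleGraph

section MOPland

open Fin.NatCast
open Fin.CommRing

variable {n : ℕ}

lemma mod_split {x : ℕ} (n : ℕ) (hn : 0 < n) (h : x < 2 * n) :
    (x % n = x ∧ x < n) ∨ (x % n = x - n ∧ n ≤ x) := by
  rcases lt_or_ge x n with h' | h'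
  · exact Or.inl ⟨Nat.mod_eq_of_lt h', h'⟩
  · right
    refine ⟨?_, h'⟩
    rw [Nat.mod_eq_sub_mod h']
    exact Nat.mod_eq_of_lt (by omega)

/-- rotating two circularly crossing chords keeps them (linearly) crossing -/
lemma rot_cross {n k p q r s : ℕ} (hk : k < n) (hq : q < n) (hs : s < n)
    (h1 : p < r) (h2 : r < q) (h3 : q < s) :
    (min ((p + k) % n) ((q + k) % n) < min ((r + k) % n) ((s + k) % n) ∧
     min ((r + k) % n) ((s + k) % n) < max ((p + k) % n) ((q + k) % n) ∧
     max ((p + k) % n) ((q + k) % n) < max ((r + k) % n) ((s + k) % n)) ∨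
    (min ((r + k) % n) ((s + k) % n) < min ((p + k) % n) ((q + k) % n) ∧
     min ((p + k) % n) ((q + k) % n) < max ((r + k) % n) ((s + k) % n) ∧
     max ((r + k) % n) ((s + k) % n) < max ((p + k) % n) ((q + k) % n)) := by
  have hp := mod_split n (by omega) (x := p + k) (by omega)
  have hq' := mod_split n (by omega) (x := q + k) (by omega)
  have hr := mod_split n (by omega) (x := r + k) (by omega)
  have hs' := mod_split n (by omega) (x := s + k) (by omega)
  rcases hp with ⟨hp, _⟩ | ⟨hp, _⟩ <;> rcases hq' with ⟨hq', _⟩ | ⟨hq', _⟩ <;>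
    rcases hr with ⟨hr, _⟩ | ⟨hr, _⟩ <;> rcases hs' with ⟨hs', _⟩ | ⟨hs', _⟩ <;>
    rw [hp, hq', hr, hs'] <;> omega

variable [NeZero n] (G : SimpleGraph (Fin n))

lemma noncross_val (hG : IsMOP G) {x y z w : Fin n} (hxy : G.Adj x y) (hzw : G.Adj z w)
    (h1 : min x.val y.val < min z.val w.val) (h2 : min z.val w.val < max x.val y.val)
    (h3 : max x.val y.val < max z.val w.val) : False := by
  rcases le_total x.val y.val with hA | hA <;> rcases le_total z.val w.val with hb | hb
  · simp only [min_eq_left hA, max_eq_right hA, min_eq_left hb, max_eq_right hb] at h1 h2 h3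
    exact hG.noncross x z y w (Fin.lt_def.mpr h1) (Fin.lt_def.mpr h2) (Fin.lt_def.mpr h3)
      hxy hzw
  · simp only [min_eq_left hA, max_eq_right hA, min_eq_right hb, max_eq_left hb] at h1 h2 h3
    exact hG.noncross x w y z (Fin.lt_def.mpr h1) (Fin.lt_def.mpr h2) (Fin.lt_def.mpr h3)
      hxy hzw.symm
  · simp only [min_eq_right hA, max_eq_left hA, min_eq_left hb, max_eq_right hb] at h1 h2 h3
    exact hG.noncross y z x w (Fin.lt_def.mpr h1) (Fin.lt_def.mpr h2) (Fin.lt_def.mpr h3)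
      hxy.symm hzw
  · simp only [min_eq_right hA, max_eq_left hA, min_eq_right hb, max_eq_left hb] at h1 h2 h3
    exact hG.noncross y w x z (Fin.lt_def.mpr h1) (Fin.lt_def.mpr h2) (Fin.lt_def.mpr h3)
      hxy.symm hzw.symm

open scoped Classical in
/-- The chord set of `G`, rotated so that the vertex `k` is at position `0`. -/
noncomputable def mopD (k : Fin n) : Finset (ℕ × ℕ) :=
  (Finset.range n ×ˢ Finset.range n).filter
    (fun c => c.1 + 2 ≤ c.2 ∧ c.2 + 1 ≤ n ∧ ¬(c.1 = 0 ∧ c.2 + 1 = n) ∧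
      G.Adj ((c.1 : Fin n) + k) ((c.2 : Fin n) + k))

lemma mem_mopD {k : Fin n} {c : ℕ × ℕ} :
    c ∈ mopD G k ↔ c.1 + 2 ≤ c.2 ∧ c.2 + 1 ≤ n ∧ ¬(c.1 = 0 ∧ c.2 + 1 = n) ∧
      G.Adj ((c.1 : Fin n) + k) ((c.2 : Fin n) + k) := by
  classical
  rw [mopD, Finset.mem_filter, Finset.mem_product, Finset.mem_range, Finset.mem_range]
  constructor
  · tauto
  · intro h
    exact ⟨⟨by omega, by omega⟩, h⟩

variable {G}

section basics
variable (hn6 : 6 ≤ n)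
include hn6

lemma val_one_n : (1 : Fin n).val = 1 := by
  rw [Fin.val_one']
  exact Nat.mod_eq_of_lt (by omega)

lemma val_cast_n {x : ℕ} (hx : x < n) : ((x : Fin n)).val = x :=
  Fin.val_cast_of_lt hx

lemma val_add_one (a : Fin n) : (a + 1).val = (a.val + 1) % n := by
  rw [Fin.add_def, val_one_n hn6]

lemma val_sub_one (a : Fin n) : (a - 1).val = (a.val + (n - 1)) % n := by
  rw [Fin.sub_def, val_one_n hn6]
  show (n - 1 + a.val) % n = _
  rw [Nat.add_comm]

lemma val_cast_add {x : ℕ} (hx : x < n) (k : Fin n) :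
    ((x : Fin n) + k).val = (x + k.val) % n := by
  rw [Fin.add_def, val_cast_n hn6 hx]

lemma adj_succ (hG : IsMOP G) (a : Fin n) : G.Adj a (a + 1) :=
  hG.cycle a (a + 1) (val_add_one hn6 a)

lemma adj_pred (hG : IsMOP G) (a : Fin n) : G.Adj a (a - 1) := by
  have h := adj_succ hn6 hG (a - 1)
  rw [sub_add_cancel] at h
  exact h.symm

end basics

variable (hn6 : 6 ≤ n) (hG : IsMOP G)
include hn6 hG

lemma mop_hnc {k : Fin n} : ∀ c ∈ mopD G k, ∀ c' ∈ mopD G k,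
    ¬(c.1 < c'.1 ∧ c'.1 < c.2 ∧ c.2 < c'.2) := by
  intro c hc c' hc' ⟨h1, h2, h3⟩
  obtain ⟨hm1, hm2, hm3, hadj⟩ := (mem_mopD G).mp hc
  obtain ⟨hm1', hm2', hm3', hadj'⟩ := (mem_mopD G).mp hc'
  have hv1 := val_cast_add hn6 (x := c.1) (by omega) k
  have hv2 := val_cast_add hn6 (x := c.2) (by omega) k
  have hv3 := val_cast_add hn6 (x := c'.1) (by omega) k
  have hv4 := val_cast_add hn6 (x := c'.2) (by omega) k
  have hcr := rot_cross (n := n) (k := k.val) (p := c.1) (q := c.2) (r := c'.1) (s := c'.2)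
    k.isLt (by omega) (by omega) h1 h2 h3
  rcases hcr with ⟨a1, a2, a3⟩ | ⟨a1, a2, a3⟩
  · exact noncross_val G hG hadj hadj'
      (by rw [hv1, hv2, hv3, hv4]; exact a1)
      (by rw [hv1, hv2, hv3, hv4]; exact a2)
      (by rw [hv1, hv2, hv3, hv4]; exact a3)
  · exact noncross_val G hG hadj' hadj
      (by rw [hv1, hv2, hv3, hv4]; exact a1)
      (by rw [hv1, hv2, hv3, hv4]; exact a2)
      (by rw [hv1, hv2, hv3, hv4]; exact a3)

omit hG in
lemma fin_cast_eq_iff {x y : ℕ} (hx : x < n) (hy : y < n)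
    (h : (x : Fin n) = (y : Fin n)) : x = y := by
  have := congrArg Fin.val h
  rwa [val_cast_n hn6 hx, val_cast_n hn6 hy] at this

omit hG in
lemma fin_addk_eq_iff {x y : ℕ} {k : Fin n} (hx : x < n) (hy : y < n)
    (h : (x : Fin n) + k = (y : Fin n) + k) : x = y :=
  fin_cast_eq_iff hn6 hx hy (add_right_cancel h)

omit hG in
/-- `(x+1 : ℕ)` casts to the `Fin n` successor, when `x + 1 < n`. -/
lemma cast_succ_eq {x : ℕ} (hx : x + 1 < n) : ((x + 1 : ℕ) : Fin n) = (x : Fin n) + 1 := by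
  apply Fin.ext
  rw [val_cast_n hn6 hx, val_add_one hn6, val_cast_n hn6 (by omega)]
  exact (Nat.mod_eq_of_lt hx).symm

omit hG in
lemma cast_last_add_one : ((n - 1 : ℕ) : Fin n) + 1 = 0 := by
  apply Fin.ext
  rw [val_add_one hn6, val_cast_n hn6 (by omega)]
  have h : n - 1 + 1 = n := by omega
  rw [h, Nat.mod_self, Fin.val_zero]

noncomputable def cycE : Finset (Sym2 (Fin n)) :=
  Finset.univ.image (fun i : Fin n => s(i, i + 1))

noncomputable def chordE (Gr : SimpleGraph (Fin n)) (k : Fin n) : Finset (Sym2 (Fin n)) :=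
  (mopD Gr k).image (fun c => s((c.1 : Fin n) + k, (c.2 : Fin n) + k))

omit hG in
lemma card_cycE : (cycE (n := n)).card = n := by
  rw [cycE, Finset.card_image_of_injective _ ?_, Finset.card_univ, Fintype.card_fin]
  intro i j hij
  rw [Sym2.eq_iff] at hij
  rcases hij with ⟨h, _⟩ | ⟨h1, h2⟩
  · exact h
  · exfalso
    subst h2
    have hv : i.val = ((i + 1) + 1).val := congrArg Fin.val h1
    rw [val_add_one hn6, val_add_one hn6] at hv
    rcases mod_split n (by omega) (x := i.val + 1) (by omega) with ⟨ha, hb⟩ | ⟨ha, hb⟩ <;>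
      rw [ha] at hv
    · rcases mod_split n (by omega) (x := i.val + 1 + 1) (by omega) with ⟨hc, hd⟩ | ⟨hc, hd⟩ <;>
        rw [hc] at hv <;> omega
    · rcases mod_split n (by omega) (x := i.val + 1 - n + 1) (by omega) with ⟨hc, hd⟩ | ⟨hc, hd⟩ <;>
        rw [hc] at hv <;> omega

lemma card_chordE (k : Fin n) : (chordE G k).card = (mopD G k).card := by
  rw [chordE, Finset.card_image_of_injOn]
  intro c hc c' hc' h
  obtain ⟨hm1, hm2, _, _⟩ := (mem_mopD G).mp hc
  obtain ⟨hm1', hm2', _, _⟩ := (mem_mopD G).mp hc'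
  rw [Sym2.eq_iff] at h
  rcases h with ⟨h1, h2⟩ | ⟨h1, h2⟩
  · have e1 := fin_addk_eq_iff hn6 (by omega) (by omega) h1
    have e2 := fin_addk_eq_iff hn6 (by omega) (by omega) h2
    exact Prod.ext e1 e2
  · have e1 := fin_addk_eq_iff hn6 (by omega) (by omega) h1
    have e2 := fin_addk_eq_iff hn6 (by omega) (by omega) h2
    omega

omit hG in
lemma mod_succ_eq {l r : ℕ} (hl : l < n) (hr : r < n) (h : r = (l + 1) % n) :
    r = l + 1 ∨ (l = n - 1 ∧ r = 0) := by
  rcases mod_split n (by omega) (x := l + 1) (by omega) with ⟨ha, _⟩ | ⟨ha, hb⟩ <;>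
    rw [ha] at h <;> omega

lemma disj_cyc_chord (k : Fin n) : Disjoint (cycE (n := n)) (chordE G k) := by
  rw [Finset.disjoint_left]
  intro e he he'
  rw [cycE, Finset.mem_image] at he
  rw [chordE, Finset.mem_image] at he'
  obtain ⟨i, _, hi⟩ := he
  obtain ⟨c, hc, hcE⟩ := he'
  obtain ⟨hm1, hm2, hm3, _⟩ := (mem_mopD G).mp hc
  rw [← hcE, Sym2.eq_iff] at hi
  have hv1 := val_cast_add hn6 (x := c.1) (by omega) k
  have hv2 := val_cast_add hn6 (x := c.2) (by omega) k
  have hkn := k.isLt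
  rcases hi with ⟨h1, h2⟩ | ⟨h1, h2⟩
  · -- c.2 + k = (c.1 + k) + 1
    have h3 : ((c.1 : Fin n) + k) + 1 = (c.2 : Fin n) + k := by rw [← h1]; exact h2
    have hE : (c.2 + k.val) % n = ((c.1 + k.val) % n + 1) % n := by
      have := congrArg Fin.val h3
      rw [val_add_one hn6, hv1, hv2] at this
      exact this.symm
    have hE2 := mod_succ_eq hn6 (Nat.mod_lt _ (by omega)) (Nat.mod_lt _ (by omega)) hE
    rcases mod_split n (by omega) (x := c.1 + k.val) (by omega) with ⟨ha, hb⟩ | ⟨ha, hb⟩ <;>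
      rcases mod_split n (by omega) (x := c.2 + k.val) (by omega) with ⟨hc', hd⟩ | ⟨hc', hd⟩ <;>
      rw [ha, hc'] at hE2 <;> omega
  · -- c.1 + k = (c.2 + k) + 1
    have h3 : ((c.2 : Fin n) + k) + 1 = (c.1 : Fin n) + k := by rw [← h2, ← h1]
    have hE : (c.1 + k.val) % n = ((c.2 + k.val) % n + 1) % n := by
      have := congrArg Fin.val h3
      rw [val_add_one hn6, hv1, hv2] at this
      exact this.symm
    have hE2 := mod_succ_eq hn6 (Nat.mod_lt _ (by omega)) (Nat.mod_lt _ (by omega)) hE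
    rcases mod_split n (by omega) (x := c.1 + k.val) (by omega) with ⟨ha, hb⟩ | ⟨ha, hb⟩ <;>
      rcases mod_split n (by omega) (x := c.2 + k.val) (by omega) with ⟨hc', hd⟩ | ⟨hc', hd⟩ <;>
      rw [ha, hc'] at hE2 <;> omega

lemma edge_cases (k : Fin n) {u v : Fin n} (h : G.Adj u v) (hlt : (u - k).val < (v - k).val) :
    s(u, v) ∈ cycE (n := n) ∪ chordE G k := by
  set p := (u - k).val with hp
  set q := (v - k).val with hq
  have hpn : p < n := (u - k).isLt
  have hqn : q < n := (v - k).isLt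
  have hu : (p : Fin n) + k = u := by
    rw [hp, Fin.cast_val_eq_self, sub_add_cancel]
  have hv : (q : Fin n) + k = v := by
    rw [hq, Fin.cast_val_eq_self, sub_add_cancel]
  by_cases hc1 : q = p + 1
  · apply Finset.mem_union_left
    rw [cycE, Finset.mem_image]
    refine ⟨u, Finset.mem_univ u, ?_⟩
    have hvu : v = u + 1 := by
      rw [← hu, ← hv, hc1, cast_succ_eq hn6 (by omega)]
      ring
    rw [hvu]
  by_cases hc2 : p = 0 ∧ q = n - 1
  · apply Finset.mem_union_left
    rw [cycE, Finset.mem_image]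
    refine ⟨v, Finset.mem_univ v, ?_⟩
    have huv : u = v + 1 := by
      rw [← hu, ← hv, hc2.1, hc2.2]
      have : ((n - 1 : ℕ) : Fin n) + k + 1 = (((n - 1 : ℕ) : Fin n) + 1) + k := by ring
      rw [this, cast_last_add_one hn6]
      simp
    rw [huv, Sym2.eq_swap]
  · apply Finset.mem_union_right
    rw [chordE, Finset.mem_image]
    refine ⟨(p, q), ?_, ?_⟩
    · rw [mem_mopD]
      refine ⟨by omega, by omega, by dsimp only; omega, ?_⟩
      simp only
      rw [hu, hv]
      exact h
    · simp only
      rw [hu, hv]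

lemma union_eq [Fintype G.edgeSet] (k : Fin n) : cycE (n := n) ∪ chordE G k = G.edgeSet.toFinset := by
  classical
  apply Finset.Subset.antisymm
  · apply Finset.union_subset
    · intro e he
      rw [cycE, Finset.mem_image] at he
      obtain ⟨i, _, hi⟩ := he
      rw [← hi, Set.mem_toFinset, SimpleGraph.mem_edgeSet]
      exact adj_succ hn6 hG i
    · intro e he
      rw [chordE, Finset.mem_image] at he
      obtain ⟨c, hc, hcE⟩ := he
      rw [← hcE, Set.mem_toFinset, SimpleGraph.mem_edgeSet]
      exact ((mem_mopD G).mp hc).2.2.2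
  · intro e he
    revert he
    refine Sym2.ind (fun u v => ?_) e
    intro he
    rw [Set.mem_toFinset, SimpleGraph.mem_edgeSet] at he
    have hne : (u - k).val ≠ (v - k).val := by
      intro hh
      exact he.ne (by
        have : u - k = v - k := Fin.ext hh
        have := congrArg (fun z => z + k) this
        simpa [sub_add_cancel] using this)
    rcases lt_or_gt_of_ne hne with hlt | hlt
    · exact edge_cases hn6 hG k he hlt
    · rw [Sym2.eq_swap]
      exact edge_cases hn6 hG k he.symm hlt

lemma mop_hcard (k : Fin n) : (mopD G k).card + 3 = n := by
  classical
  have hcnt : G.edgeSet.toFinset.card = 2 * n - 3 := by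
    have h := hG.card_edges
    rwa [Set.ncard_eq_toFinset_card'] at h
  have hu := union_eq hn6 hG k
  have hd := disj_cyc_chord hn6 hG k
  have hcu := Finset.card_union_of_disjoint hd
  rw [hu, card_cycE hn6, card_chordE hn6 hG k] at hcu
  omega

omit hG in
lemma addk_succ {o x : ℕ} (ho : o < n) (hx : x < n) {k : Fin n}
    (h : (o : Fin n) + k = ((x : Fin n) + k) + 1) : o = x + 1 ∨ (x = n - 1 ∧ o = 0) := by
  have hkn := k.isLt
  have hE : (o + k.val) % n = ((x + k.val) % n + 1) % n := by
    have := congrArg Fin.val h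
    rwa [val_add_one hn6, val_cast_add hn6 ho, val_cast_add hn6 hx] at this
  have hE2 := mod_succ_eq hn6 (Nat.mod_lt _ (by omega)) (Nat.mod_lt _ (by omega)) hE
  rcases mod_split n (by omega) (x := o + k.val) (by omega) with ⟨ha, hb⟩ | ⟨ha, hb⟩ <;>
    rcases mod_split n (by omega) (x := x + k.val) (by omega) with ⟨hc', hd⟩ | ⟨hc', hd⟩ <;>
    rw [ha, hc'] at hE2 <;> omega

omit hG in
lemma succ_ne_pred (a : Fin n) : a + 1 ≠ a - 1 := by
  intro hh
  have hE := congrArg Fin.val hh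
  rw [val_add_one hn6, val_sub_one hn6] at hE
  rcases mod_split n (by omega) (x := a.val + 1) (by omega) with ⟨ha, hb⟩ | ⟨ha, hb⟩ <;>
    rcases mod_split n (by omega) (x := a.val + (n - 1)) (by omega) with ⟨hc', hd⟩ | ⟨hc', hd⟩ <;>
    rw [ha, hc'] at hE <;> omega

set_option maxHeartbeats 2000000 in
lemma mop_hdeg (k : Fin n) (x : ℕ) (hx : x < n) :
    gdeg G ((x : Fin n) + k) = 2 + ((mopD G k).filter (fun c => c.1 = x ∨ c.2 = x)).card := by
  classical
  set v : Fin n := (x : Fin n) + k with hv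
  set F := (mopD G k).filter (fun c => c.1 = x ∨ c.2 = x) with hF
  set oth : ℕ × ℕ → ℕ := fun c => if c.1 = x then c.2 else c.1 with hoth
  set B : Finset (Fin n) := F.image (fun c => ((oth c : ℕ) : Fin n) + k) with hB
  -- facts about the other endpoint of a chord at x
  have hothFacts : ∀ c ∈ F, oth c < n ∧ oth c ≠ x ∧ oth c ≠ x + 1 ∧ x ≠ oth c + 1 ∧
      ¬(x = n - 1 ∧ oth c = 0) ∧ ¬(oth c = n - 1 ∧ x = 0) := by
    intro c hc
    obtain ⟨hcD, hcT⟩ := Finset.mem_filter.mp hc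
    obtain ⟨hm1, hm2, hm3, _⟩ := (mem_mopD G).mp hcD
    by_cases h1 : c.1 = x
    · have : oth c = c.2 := by rw [hoth]; simp [h1]
      rw [this]
      omega
    · have hx2 : c.2 = x := by tauto
      have : oth c = c.1 := by rw [hoth]; simp [h1]
      rw [this]
      omega
  have hBne : ∀ c ∈ F, ((oth c : ℕ) : Fin n) + k ≠ v + 1 ∧ ((oth c : ℕ) : Fin n) + k ≠ v - 1 := by
    intro c hc
    obtain ⟨ho1, ho2, ho3, ho4, ho5, ho6⟩ := hothFacts c hc
    constructor
    · intro hh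
      rcases addk_succ hn6 ho1 hx hh with h | h
      · omega
      · omega
    · intro hh
      have hh' : (x : Fin n) + k = (((oth c : ℕ) : Fin n) + k) + 1 := by
        rw [hh]; rw [sub_add_cancel]
      rcases addk_succ hn6 hx ho1 hh' with h | h
      · omega
      · omega
  have hne1 : v + 1 ≠ v - 1 := succ_ne_pred hn6 v
  have hcardB : B.card = F.card := by
    rw [hB, Finset.card_image_of_injOn]
    intro c hc c' hc' hEq
    obtain ⟨ho1, _⟩ := hothFacts c hc
    obtain ⟨ho1', _⟩ := hothFacts c' hc'
    have hoo : oth c = oth c' := fin_addk_eq_iff hn6 ho1 ho1' hEq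
    obtain ⟨hcD, hcT⟩ := Finset.mem_filter.mp hc
    obtain ⟨hm1, _, _, _⟩ := (mem_mopD G).mp hcD
    obtain ⟨hcD', hcT'⟩ := Finset.mem_filter.mp hc'
    obtain ⟨hm1', _, _, _⟩ := (mem_mopD G).mp hcD'
    have hsh : (c.1 = x ∧ c.2 = oth c) ∨ (c.2 = x ∧ c.1 = oth c) := by
      by_cases h1 : c.1 = x
      · left; exact ⟨h1, by rw [hoth]; simp [h1]⟩
      · right; exact ⟨by tauto, by rw [hoth]; simp [h1]⟩
    have hsh' : (c'.1 = x ∧ c'.2 = oth c') ∨ (c'.2 = x ∧ c'.1 = oth c') := by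
      by_cases h1 : c'.1 = x
      · left; exact ⟨h1, by rw [hoth]; simp [h1]⟩
      · right; exact ⟨by tauto, by rw [hoth]; simp [h1]⟩
    rcases hsh with ⟨hA1, hA2⟩ | ⟨hA1, hA2⟩ <;> rcases hsh' with ⟨hB1, hB2⟩ | ⟨hB1, hB2⟩ <;>
      apply Prod.ext <;> omega
  -- the neighborhood
  have hNbhd : (G.neighborSet v).toFinset = insert (v + 1) (insert (v - 1) B) := by
    ext w
    rw [Set.mem_toFinset, SimpleGraph.mem_neighborSet]
    constructor
    · intro hadj
      set o := (w - k).val with ho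
      have hon : o < n := (w - k).isLt
      have hw : (o : Fin n) + k = w := by rw [ho, Fin.cast_val_eq_self, sub_add_cancel]
      by_cases hc1 : o = x + 1
      · apply Finset.mem_insert.mpr
        left
        rw [← hw, hc1, cast_succ_eq hn6 (by omega)]
        ring
      by_cases hc2 : x = o + 1
      · apply Finset.mem_insert.mpr; right
        apply Finset.mem_insert.mpr; left
        have hvw : v = w + 1 := by
          show (x : Fin n) + k = w + 1
          rw [hc2, cast_succ_eq hn6 (by omega), ← hw]
          ring
        rw [hvw, add_sub_cancel_right]
      by_cases hc3 : x = 0 ∧ o = n - 1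
      · apply Finset.mem_insert.mpr; right
        apply Finset.mem_insert.mpr; left
        have hveq : v = k := by show (x : Fin n) + k = k; rw [hc3.1]; simp
        have hweq : w + 1 = k := by
          rw [← hw, hc3.2]
          have : ((n - 1 : ℕ) : Fin n) + k + 1 = (((n - 1 : ℕ) : Fin n) + 1) + k := by ring
          rw [this, cast_last_add_one hn6]
          simp
        rw [hveq, ← hweq]
        rw [add_sub_cancel_right]
      by_cases hc4 : o = 0 ∧ x = n - 1
      · apply Finset.mem_insert.mpr; left
        have hweq : w = k := by rw [← hw, hc4.1]; simp
        have hveq : v + 1 = k := by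
          show ((x : Fin n) + k) + 1 = k
          rw [hc4.2]
          have : ((n - 1 : ℕ) : Fin n) + k + 1 = (((n - 1 : ℕ) : Fin n) + 1) + k := by ring
          rw [this, cast_last_add_one hn6]
          simp
        rw [hweq, hveq]
      · -- chord case
        apply Finset.mem_insert.mpr; right
        apply Finset.mem_insert.mpr; right
        have hone : o ≠ x := by
          intro hh
          apply hadj.ne
          rw [← hw, hh]
        rcases lt_or_gt_of_ne hone with hlt | hlt
        · -- c = (o, x)
          refine Finset.mem_image.mpr ⟨(o, x), ?_, ?_⟩
          · rw [hF, Finset.mem_filter]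
            refine ⟨(mem_mopD G).mpr ⟨by omega, by omega, by dsimp only; omega, ?_⟩,
              Or.inr rfl⟩
            dsimp only
            rw [hw]
            exact hadj.symm
          · have : oth (o, x) = o := by rw [hoth]; simp; omega
            rw [this, hw]
        · -- c = (x, o)
          refine Finset.mem_image.mpr ⟨(x, o), ?_, ?_⟩
          · rw [hF, Finset.mem_filter]
            refine ⟨(mem_mopD G).mpr ⟨by omega, by omega, by dsimp only; omega, ?_⟩,
              Or.inl rfl⟩
            dsimp only
            rw [hw]
            exact hadj
          · have : oth (x, o) = o := by rw [hoth]; simp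
            rw [this, hw]
    · intro hw
      rcases Finset.mem_insert.mp hw with h | h
      · rw [h]; exact adj_succ hn6 hG v
      rcases Finset.mem_insert.mp h with h' | h'
      · rw [h']; exact adj_pred hn6 hG v
      · obtain ⟨c, hc, hcE⟩ := Finset.mem_image.mp h'
        obtain ⟨hcD, hcT⟩ := Finset.mem_filter.mp hc
        have hadjc := ((mem_mopD G).mp hcD).2.2.2
        by_cases h1 : c.1 = x
        · have : oth c = c.2 := by rw [hoth]; simp [h1]
          rw [← hcE, this]
          show G.Adj ((x : Fin n) + k) _
          rw [← h1]
          exact hadjc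
        · have hx2 : c.2 = x := by tauto
          have : oth c = c.1 := by rw [hoth]; simp [h1]
          rw [← hcE, this]
          show G.Adj ((x : Fin n) + k) _
          rw [← hx2]
          exact hadjc.symm
  -- count
  rw [gdeg, Set.ncard_eq_toFinset_card', hNbhd]
  rw [Finset.card_insert_of_notMem, Finset.card_insert_of_notMem]
  · omega
  · intro hh
    obtain ⟨c, hc, hcE⟩ := Finset.mem_image.mp hh
    exact (hBne c hc).2 hcE
  · intro hh
    rcases Finset.mem_insert.mp hh with h | h
    · exact hne1 h
    · obtain ⟨c, hc, hcE⟩ := Finset.mem_image.mp h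
      exact (hBne c hc).1 hcE

noncomputable def mopSys (k : Fin n) : CSys n where
  D := mopD G k
  dg := fun x => gdeg G ((x : Fin n) + k)
  hmem := by
    intro c hc
    have := (mem_mopD G).mp hc
    tauto
  hnc := mop_hnc hn6 hG
  hcard := mop_hcard hn6 hG k
  hdeg := fun x hx => mop_hdeg hn6 hG k x hx
  hn := hn6

lemma mopSys_D (k : Fin n) : (mopSys hn6 hG k).D = mopD G k := rfl

lemma mopSys_dg (k : Fin n) (x : ℕ) :
    (mopSys hn6 hG k).dg x = gdeg G ((x : Fin n) + k) := rfl

lemma mopSys_adjS {k : Fin n} {x y : ℕ} (hx : x < n) (hy : y < n)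
    (h : (mopSys hn6 hG k).adjS x y) : G.Adj ((x : Fin n) + k) ((y : Fin n) + k) := by
  have wrap : ∀ z w : ℕ, z = 0 → w + 1 = n →
      G.Adj ((z : Fin n) + k) ((w : Fin n) + k) := by
    intro z w hz hw
    have e1 : (z : Fin n) + k = k := by rw [hz]; simp
    have e2 : (w : Fin n) + k = k - 1 := by
      have h3 : ((w : Fin n) + k) + 1 = k := by
        have h4 : (w : Fin n) + k + 1 = ((w : Fin n) + 1) + k := by ring
        have h5 : w = n - 1 := by omega
        rw [h4, h5, cast_last_add_one hn6]
        simp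
      exact eq_sub_of_add_eq h3
    rw [e1, e2]
    exact adj_pred hn6 hG k
  rcases h with h | h | h | h | ⟨h1, h2⟩ | ⟨h1, h2⟩
  · exact ((mem_mopD G).mp h).2.2.2
  · exact (((mem_mopD G).mp h).2.2.2).symm
  · have e1 : (y : Fin n) = (x : Fin n) + 1 := by rw [← h, cast_succ_eq hn6 (by omega)]
    have e2 : (x : Fin n) + 1 + k = ((x : Fin n) + k) + 1 := by ring
    rw [e1, e2]
    exact adj_succ hn6 hG _
  · have e1 : (x : Fin n) = (y : Fin n) + 1 := by rw [← h, cast_succ_eq hn6 (by omega)]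
    have e2 : (y : Fin n) + 1 + k = ((y : Fin n) + k) + 1 := by ring
    rw [e1, e2]
    exact (adj_succ hn6 hG _).symm
  · exact wrap x y h1 h2
  · exact (wrap y x h1 h2).symm

lemma exists_ear_G : ∃ e : Fin n, gdeg G e = 2 := by
  obtain ⟨e, he, hd⟩ := (mopSys hn6 hG (0 : Fin n)).exists_ear
  refine ⟨(e : Fin n), ?_⟩
  rw [mopSys_dg, add_zero] at hd
  exact hd

lemma two_ears_G : ∃ e1 e2 : Fin n, e1 ≠ e2 ∧ gdeg G e1 = 2 ∧ gdeg G e2 = 2 := by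
  obtain ⟨e, hdeg⟩ := exists_ear_G hn6 hG
  have h0 : (mopSys hn6 hG e).dg 0 = 2 := by
    rw [mopSys_dg]
    simpa using hdeg
  obtain ⟨c, hc1, hc2, hcd⟩ := (mopSys hn6 hG e).second_ear h0
  rw [mopSys_dg] at hcd
  refine ⟨e, (c : Fin n) + e, ?_, hdeg, hcd⟩
  intro hh
  have : (c : Fin n) = 0 := by
    have := right_eq_add.mp hh
    exact this
  have hval := congrArg Fin.val this
  rw [val_cast_n hn6 (by omega), Fin.val_zero] at hval
  omega

lemma ear_neighbors {v w : Fin n} (hv : gdeg G v = 2) (hadj : G.Adj v w) :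
    w = v - 1 ∨ w = v + 1 := by
  have hsub : ({v - 1, v + 1} : Set (Fin n)) ⊆ G.neighborSet v := by
    intro z hz
    rcases hz with h | h
    · rw [h]; exact adj_pred hn6 hG v
    · rw [Set.mem_singleton_iff] at h; rw [h]; exact adj_succ hn6 hG v
  have hcard : ({v - 1, v + 1} : Set (Fin n)).ncard = 2 :=
    Set.ncard_pair (fun hh => succ_ne_pred hn6 v hh.symm)
  have heq : ({v - 1, v + 1} : Set (Fin n)) = G.neighborSet v :=
    Set.eq_of_subset_of_ncard_le hsub (by rw [hcard]; exact le_of_eq hv) (Set.toFinite _)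
  have hw : w ∈ G.neighborSet v := hadj
  rw [← heq] at hw
  simpa using hw

lemma no_adj_ears_G {u v : Fin n} (hu : gdeg G u = 2) (hv : gdeg G v = 2)
    (hadj : G.Adj u v) : False := by
  have key : ∀ u v : Fin n, gdeg G u = 2 → gdeg G v = 2 → v = u + 1 → False := by
    intro u v hu hv he
    have h0 : (mopSys hn6 hG v).dg 0 = 2 := by
      rw [mopSys_dg]; simpa using hv
    have hl : (mopSys hn6 hG v).dg (n - 1) = 2 := by
      rw [mopSys_dg]
      have heq : ((n - 1 : ℕ) : Fin n) + v = u := by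
        rw [he]
        have h4 : ((n - 1 : ℕ) : Fin n) + (u + 1) = (((n - 1 : ℕ) : Fin n) + 1) + u := by ring
        rw [h4, cast_last_add_one hn6, zero_add]
      rw [heq]; exact hu
    exact (mopSys hn6 hG v).no_two_ears h0 hl
  rcases ear_neighbors hn6 hG hu hadj with h | h
  · exact key v u hv hu (by rw [h, sub_add_cancel])
  · exact key u v hu hv h

lemma quad_G : ∃ a b c d : Fin n, a ≠ b ∧ a ≠ c ∧ a ≠ d ∧ b ≠ c ∧ b ≠ d ∧ c ≠ d ∧
    G.Adj a b ∧ G.Adj b c ∧ G.Adj c d ∧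
    gdeg G a ≤ gdeg G b ∧ gdeg G b ≤ gdeg G c ∧ gdeg G c ≤ gdeg G d := by
  obtain ⟨e, hdeg⟩ := exists_ear_G hn6 hG
  have h0 : (mopSys hn6 hG e).dg 0 = 2 := by
    rw [mopSys_dg]; simpa using hdeg
  obtain ⟨q1, q2, q3, q4, l1, l2, l3, l4, ne12, ne13, ne14, ne23, ne24, ne34,
    a12, a23, a34, d12, d23, d34⟩ := (mopSys hn6 hG e).quad_exists h0
  refine ⟨(q1 : Fin n) + e, (q2 : Fin n) + e, (q3 : Fin n) + e, (q4 : Fin n) + e,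
    fun h => ne12 (fin_addk_eq_iff hn6 l1 l2 h),
    fun h => ne13 (fin_addk_eq_iff hn6 l1 l3 h),
    fun h => ne14 (fin_addk_eq_iff hn6 l1 l4 h),
    fun h => ne23 (fin_addk_eq_iff hn6 l2 l3 h),
    fun h => ne24 (fin_addk_eq_iff hn6 l2 l4 h),
    fun h => ne34 (fin_addk_eq_iff hn6 l3 l4 h),
    mopSys_adjS hn6 hG l1 l2 a12,
    mopSys_adjS hn6 hG l2 l3 a23,
    mopSys_adjS hn6 hG l3 l4 a34,
    d12, d23, d34⟩

end MOPland

theorem mop_mp_bounds' {n : ℕ} (hn : 6 ≤ n) (G : SimpleGraph (Fin n)) (hG : IsMOP G) :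
    4 ≤ mp G ∧ mp G ≤ n - 1 := by
  haveI : NeZero n := ⟨by omega⟩
  set MPS := {m | ∃ (u v : Fin n) (p : G.Walk u v), p.IsPath ∧ DegMonotone G p ∧
    p.support.length = m} with hMPS
  have hub : ∀ m ∈ MPS, m ≤ n := by
    rintro m ⟨u, v, p, hpath, _, hlen⟩
    rw [← hlen]
    have := (SimpleGraph.Walk.isPath_def _).mp hpath
    calc p.support.length ≤ Fintype.card (Fin n) := this.length_le_card
      _ = n := Fintype.card_fin n
  have hbdd : BddAbove MPS := ⟨n, fun m hm => hub m hm⟩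
  constructor
  · -- lower bound
    obtain ⟨a, b, c, d, nab, nac, nad, nbc, nbd, ncd, hab, hbc, hcd, d1, d2, d3⟩ :=
      quad_G hn hG
    set p : G.Walk a d :=
      SimpleGraph.Walk.cons hab (SimpleGraph.Walk.cons hbc (SimpleGraph.Walk.cons hcd
        SimpleGraph.Walk.nil)) with hp
    have hsup : p.support = [a, b, c, d] := by
      rw [hp]
      simp [SimpleGraph.Walk.support_cons]
    have hpath : p.IsPath := by
      rw [SimpleGraph.Walk.isPath_def, hsup]
      simp only [List.nodup_cons, List.mem_cons, List.mem_singleton, List.not_mem_nil,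
        List.nodup_nil, or_false, not_or, and_true]
      exact ⟨⟨nab, nac, nad⟩, ⟨nbc, nbd⟩, ncd, not_false⟩
    have hmono : DegMonotone G p := by
      left
      rw [hsup]
      simp only [List.map_cons, List.map_nil, List.Chain', List.isChain_cons_cons, List.isChain_singleton,
        and_true]
      exact ⟨d1, d2, d3⟩
    have hmem : 4 ∈ MPS := ⟨a, d, p, hpath, hmono, by rw [hsup]; rfl⟩
    exact le_csSup hbdd hmem
  · -- upper bound
    apply csSup_le
    · refine ⟨1, (0 : Fin n), (0 : Fin n), SimpleGraph.Walk.nil, SimpleGraph.Walk.IsPath.nil,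
        ?_, by simp⟩
      left
      simp [List.Chain']
    · intro m hm
      have hle := hub m hm
      rcases Nat.lt_or_ge m n with hlt | hge
      · omega
      exfalso
      obtain ⟨u, v, p, hpath, hmono, hlen⟩ := hm
      have hmn : m = n := by omega
      obtain ⟨e1, e2, hne, hd1, hd2⟩ := two_ears_G hn hG
      have hnodup : p.support.Nodup := (SimpleGraph.Walk.isPath_def _).mp hpath
      have huniv : ∀ z : Fin n, z ∈ p.support := by
        intro z
        have hcard : p.support.toFinset.card = n := by
          rw [List.toFinset_card_of_nodup hnodup, hlen, hmn]
        have hueq : p.support.toFinset = Finset.univ :=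
          Finset.eq_univ_of_card _ (by rw [hcard, Fintype.card_fin])
        rw [← List.mem_toFinset, hueq]
        exact Finset.mem_univ z
      have hchain : p.support.Chain' G.Adj := p.isChain_adj_support
      have inner : ∀ (i j : Fin p.support.length), i < j → gdeg G (p.support.get i) = 2 →
          gdeg G (p.support.get j) = 2 → False := by
        intro i j hij hgi hgj
        have hi1 : (i : ℕ) + 1 < p.support.length := by
          have := j.isLt
          omega
        have hadj : G.Adj (p.support.get i) (p.support.get ⟨(i : ℕ) + 1, hi1⟩) := by
          have h := List.isChain_iff_getElem.mp hchain (i : ℕ) (by omega)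
          exact h
        have hdmid : gdeg G (p.support.get ⟨(i : ℕ) + 1, hi1⟩) = 2 := by
          by_cases hj : (i : ℕ) + 1 = (j : ℕ)
          · have : (⟨(i : ℕ) + 1, hi1⟩ : Fin p.support.length) = j := Fin.ext hj
            rw [this]; exact hgj
          · have hij2 : (⟨(i : ℕ) + 1, hi1⟩ : Fin p.support.length) < j := by
              rw [Fin.lt_def]
              have := Fin.lt_def.mp hij
              simp only
              omega
          -- monotone cases
            rcases hmono with hmi | hmd
            · rw [List.Chain', List.isChain_map] at hmi
              haveI : IsTrans (Fin n) (fun a b => gdeg G a ≤ gdeg G b) :=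
                ⟨fun _ _ _ => le_trans⟩
              have hpw := List.isChain_iff_pairwise.mp hmi
              have h1 := (List.pairwise_iff_get.mp hpw) i ⟨(i : ℕ) + 1, hi1⟩
                (by rw [Fin.lt_def]; simp)
              have h2 := (List.pairwise_iff_get.mp hpw) ⟨(i : ℕ) + 1, hi1⟩ j hij2
              omega
            · rw [List.Chain', List.isChain_map] at hmd
              haveI : IsTrans (Fin n) (fun a b => gdeg G b ≤ gdeg G a) :=
                ⟨fun _ _ _ h h' => le_trans h' h⟩
              have hpw := List.isChain_iff_pairwise.mp hmd
              have h1 := (List.pairwise_iff_get.mp hpw) i ⟨(i : ℕ) + 1, hi1⟩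
                (by rw [Fin.lt_def]; simp)
              have h2 := (List.pairwise_iff_get.mp hpw) ⟨(i : ℕ) + 1, hi1⟩ j hij2
              omega
        exact no_adj_ears_G hn hG hgi hdmid hadj
      obtain ⟨i1, hg1⟩ := List.mem_iff_get.mp (huniv e1)
      obtain ⟨i2, hg2⟩ := List.mem_iff_get.mp (huniv e2)
      have hne12 : i1 ≠ i2 := by
        intro hh
        rw [hh, hg2] at hg1
        exact hne hg1.symm
      rcases lt_or_gt_of_ne hne12 with hlt | hlt
      · exact inner i1 i2 hlt (by rw [hg1]; exact hd1) (by rw [hg2]; exact hd2)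
      · exact inner i2 i1 hlt (by rw [hg2]; exact hd2) (by rw [hg1]; exact hd1)

/-- Every maximal outerplanar graph on `n ≥ 6` vertices satisfies `4 ≤ mp(G) ≤ n − 1`. -/
theorem mop_mp_bounds {n : ℕ} (hn : 6 ≤ n) (G : SimpleGraph (Fin n)) (hG : IsMOP G) :
    4 ≤ mp G ∧ mp G ≤ n - 1 :=
  mop_mp_bounds' hn G hG
end

section
/- For even n ≥ 4, f(n,3) = n²/4 − 1, attained by K_{n/2+1, n/2−1}; for odd n ≥ 3, f(n,3) = (n²−1)/4, attained by K_{(n+1)/2,(n−1)/2}. -/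
open SimpleGraph

/-- The Turán number `t(n,k)`: the maximum number of edges of a `K_k`-free graph
on `n` vertices. -/
noncomputable def turanNum (n k : ℕ) : ℕ :=
  sSup {m | ∃ G : SimpleGraph (Fin n), G.CliqueFree k ∧ G.edgeSet.ncard = m}

/-- `f(n,k)`: the maximum number of edges of a graph on `n` vertices with no
degree-monotone path on `k` vertices. -/
noncomputable def mpEx (n k : ℕ) : ℕ :=
  sSup {m | ∃ G : SimpleGraph (Fin n), mp G < k ∧ G.edgeSet.ncard = m}

section Aux
open Finset

variable {V : Type*} [Fintype V] {G : SimpleGraph V}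

lemma gdeg_eq_degree [DecidableRel G.Adj] (v : V) : gdeg G v = G.degree v := by
  rw [gdeg, degree, neighborFinset, Set.ncard_eq_toFinset_card']

lemma mp_mem_le {m : ℕ}
    (h : m ∈ {n | ∃ (u v : V) (p : G.Walk u v), p.IsPath ∧ DegMonotone G p ∧ p.support.length = n}) :
    m ≤ Fintype.card V := by
  obtain ⟨u, v, p, hp, -, rfl⟩ := h
  exact hp.support_nodup.length_le_card

lemma mp_le_card : mp G ≤ Fintype.card V := csSup_le' fun m hm => mp_mem_le hm

lemma le_mp {u v : V} (p : G.Walk u v) (hp : p.IsPath) (hm : DegMonotone G p) :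
    p.support.length ≤ mp G :=
  le_csSup ⟨Fintype.card V, fun m hm => mp_mem_le hm⟩ ⟨u, v, p, hp, hm, rfl⟩

lemma three_le_mp {x y z : V} (hxy : G.Adj x y) (hyz : G.Adj y z) (hxz : x ≠ z)
    (h1 : gdeg G x ≤ gdeg G y) (h2 : gdeg G y ≤ gdeg G z) : 3 ≤ mp G := by
  have hp : (Walk.cons hxy (Walk.cons hyz Walk.nil)).IsPath := by
    simp [Walk.isPath_def, hxy.ne, hyz.ne, hxz]
  have hm : DegMonotone G (Walk.cons hxy (Walk.cons hyz Walk.nil)) := by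
    left; simp [List.Chain', h1, h2]
  simpa using le_mp _ hp hm

lemma three_le_mp_tri {x y z : V} (hxy : G.Adj x y) (hyz : G.Adj y z) (hxz : G.Adj x z) :
    3 ≤ mp G := by
  rcases le_total (gdeg G x) (gdeg G y) with h1 | h1 <;>
    rcases le_total (gdeg G y) (gdeg G z) with h2 | h2 <;>
    rcases le_total (gdeg G x) (gdeg G z) with h3 | h3
  · exact three_le_mp hxy hyz hxz.ne h1 h2
  · exact three_le_mp hxy hyz hxz.ne h1 h2
  · exact three_le_mp hxz hyz.symm hxy.ne h3 h2
  · exact three_le_mp hxz.symm hxy hyz.ne.symm h3 h1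
  · exact three_le_mp hxy.symm hxz hyz.ne h1 h3
  · exact three_le_mp hyz hxz.symm hxy.ne.symm h2 h3
  · exact three_le_mp hyz.symm hxy.symm hxz.ne.symm h2 h1
  · exact three_le_mp hyz.symm hxy.symm hxz.ne.symm h2 h1
open SimpleGraph Finset

lemma prod_le_even' {a b k : ℕ} (hab : a + b = 2 * k) (h : a < b) : a * b + 1 ≤ k * k := by
  obtain ⟨d, hd1, hd2⟩ : ∃ d, k = a + d ∧ 1 ≤ d := ⟨k - a, by omega, by omega⟩
  have hb : b = a + 2 * d := by omega
  subst hd1 hb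
  nlinarith

lemma prod_le_even {a b k : ℕ} (hab : a + b = 2 * k) (hne : a ≠ b) : a * b + 1 ≤ k * k := by
  rcases lt_or_gt_of_ne hne with h | h
  · exact prod_le_even' hab h
  · rw [mul_comm]; exact prod_le_even' (by omega) h

lemma prod_le_odd {a b k : ℕ} (hab : a + b = 2 * k + 1) : a * b ≤ k * k + k := by
  rcases le_or_gt a b with h | h
  · obtain ⟨d, hd⟩ : ∃ d, k = a + d := ⟨k - a, by omega⟩
    have hb : b = a + 2 * d + 1 := by omega
    subst hd hb; nlinarith
  · obtain ⟨d, hd⟩ : ∃ d, k = b + d := ⟨k - b, by omega⟩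
    have ha : a = b + 2 * d + 1 := by omega
    subst hd ha; nlinarith
open SimpleGraph Finset

variable {n : ℕ} {G : SimpleGraph (Fin n)}

lemma edge_bound_core (hn : 3 ≤ n) (h : mp G < 3) :
    ∃ Δ, Δ ≤ n ∧ 2 * G.edgeSet.ncard ≤ 2 * (Δ * (n - Δ)) ∧
      (2 ≤ Δ → 2 * G.edgeSet.ncard ≤ Δ * (Δ - 1) + (n - Δ) * Δ) := by
  classical
  have hne : (univ : Finset (Fin n)).Nonempty := ⟨⟨0, by omega⟩, mem_univ _⟩
  obtain ⟨v, -, hv⟩ := Finset.exists_max_image (univ : Finset (Fin n)) (fun u => G.degree u) hne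
  have hv' : ∀ u, G.degree u ≤ G.degree v := fun u => hv u (mem_univ u)
  set Δ := G.degree v with hΔ
  have hncard : G.edgeSet.ncard = #G.edgeFinset := by
    rw [edgeFinset, Set.ncard_eq_toFinset_card']
  have hsum : ∑ u, G.degree u = 2 * #G.edgeFinset := G.sum_degrees_eq_twice_card_edges
  set N := G.neighborFinset v with hN
  have hcardN : #N = Δ := G.card_neighborFinset_eq_degree v
  have hΔn : Δ ≤ n := by
    calc Δ = #N := hcardN.symm
      _ ≤ #(univ : Finset (Fin n)) := card_le_card (subset_univ N)
      _ = n := by simp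
  have hcardS : #(univ \ N) = n - Δ := by
    rw [card_sdiff_of_subset (subset_univ N), hcardN, card_univ, Fintype.card_fin]
  have htri : ∀ x y z : Fin n, G.Adj x y → G.Adj y z → G.Adj x z → False := fun x y z h1 h2 h3 =>
    absurd (three_le_mp_tri h1 h2 h3) (by omega)
  have hNdeg : ∀ u ∈ N, G.degree u ≤ n - Δ := by
    intro u hu
    rw [← hcardS, ← G.card_neighborFinset_eq_degree u]
    apply card_le_card
    intro w hw
    rw [mem_sdiff]
    refine ⟨mem_univ _, fun hwN => ?_⟩
    exact htri v u w ((G.mem_neighborFinset v u).1 hu) ((G.mem_neighborFinset u w).1 hw)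
      ((G.mem_neighborFinset v w).1 hwN)
  have hSdeg : ∀ u ∈ univ \ N, G.degree u ≤ Δ := fun u _ => hv' u
  have hsplit : ∑ u ∈ univ \ N, G.degree u + ∑ u ∈ N, G.degree u = 2 * #G.edgeFinset := by
    rw [Finset.sum_sdiff (subset_univ N), hsum]
  refine ⟨Δ, hΔn, ?_, ?_⟩
  · have b1 : ∑ u ∈ N, G.degree u ≤ Δ * (n - Δ) := by
      calc ∑ u ∈ N, G.degree u ≤ #N • (n - Δ) := Finset.sum_le_card_nsmul _ _ _ hNdeg
        _ = Δ * (n - Δ) := by rw [hcardN, smul_eq_mul]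
    have b2 : ∑ u ∈ univ \ N, G.degree u ≤ (n - Δ) * Δ := by
      calc ∑ u ∈ univ \ N, G.degree u ≤ #(univ \ N) • Δ := Finset.sum_le_card_nsmul _ _ _ hSdeg
        _ = (n - Δ) * Δ := by rw [hcardS, smul_eq_mul]
    rw [hncard, ← hsplit]
    have : (n - Δ) * Δ = Δ * (n - Δ) := mul_comm _ _
    omega
  · intro h2Δ
    have hNdeg' : ∀ u ∈ N, G.degree u ≤ Δ - 1 := by
      intro u hu
      have hle : G.degree u ≤ Δ := hv' u
      rcases Nat.lt_or_ge (G.degree u) Δ with hlt | hge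
      · omega
      have hdu : G.degree u = Δ := le_antisymm hle hge
      exfalso
      obtain ⟨x, hx⟩ : (N.erase u).Nonempty := by
        apply Finset.card_pos.1
        rw [Finset.card_erase_of_mem hu, hcardN]
        omega
      have hxu : x ≠ u := Finset.ne_of_mem_erase hx
      have hxN : x ∈ N := Finset.mem_of_mem_erase hx
      have hadj1 : G.Adj x v := ((G.mem_neighborFinset v x).1 hxN).symm
      have hadj2 : G.Adj v u := (G.mem_neighborFinset v u).1 hu
      have : 3 ≤ mp G := three_le_mp hadj1 hadj2 hxu
        (by rw [gdeg_eq_degree, gdeg_eq_degree]; exact hv' x)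
        (by rw [gdeg_eq_degree, gdeg_eq_degree, hdu])
      omega
    have b1 : ∑ u ∈ N, G.degree u ≤ Δ * (Δ - 1) := by
      calc ∑ u ∈ N, G.degree u ≤ #N • (Δ - 1) := Finset.sum_le_card_nsmul _ _ _ hNdeg'
        _ = Δ * (Δ - 1) := by rw [hcardN, smul_eq_mul]
    have b2 : ∑ u ∈ univ \ N, G.degree u ≤ (n - Δ) * Δ := by
      calc ∑ u ∈ univ \ N, G.degree u ≤ #(univ \ N) • Δ := Finset.sum_le_card_nsmul _ _ _ hSdeg
        _ = (n - Δ) * Δ := by rw [hcardS, smul_eq_mul]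
    rw [hncard, ← hsplit]
    omega

lemma edge_bound_even {k : ℕ} (hk : 2 ≤ k) (hnk : n = 2 * k) (h : mp G < 3) :
    G.edgeSet.ncard ≤ k * k - 1 := by
  obtain ⟨Δ, hΔn, hb, hb2⟩ := edge_bound_core (by omega) h
  obtain ⟨k', rfl⟩ : ∃ k', k = k' + 1 := ⟨k - 1, by omega⟩
  by_cases hΔk : Δ = k' + 1
  · have h2m := hb2 (by omega)
    rw [hΔk] at h2m
    have e1 : (k' + 1) * (k' + 1) = (k' + 1) * k' + (k' + 1) := by ring
    have e2 : (k' + 1) * ((k' + 1) - 1) = (k' + 1) * k' := by simp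
    have e3 : n - (k' + 1) = k' + 1 := by omega
    rw [e2, e3] at h2m
    omega
  · have hp : Δ * (n - Δ) + 1 ≤ (k' + 1) * (k' + 1) := by
      apply prod_le_even (a := Δ) (b := n - Δ) (by omega) (by omega)
    omega

lemma edge_bound_odd {k : ℕ} (hnk : n = 2 * k + 1) (h : mp G < 3) (hn : 3 ≤ n) :
    G.edgeSet.ncard ≤ k * k + k := by
  obtain ⟨Δ, hΔn, hb, -⟩ := edge_bound_core hn h
  have hp : Δ * (n - Δ) ≤ k * k + k := prod_le_odd (a := Δ) (b := n - Δ) (by omega)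
  omega


section CBG
variable (α β : Type*) [Fintype α] [Fintype β]

lemma cbg_adj (x y : α ⊕ β) : (completeBipartiteGraph α β).Adj x y ↔
    (x.isLeft ∧ y.isRight ∨ x.isRight ∧ y.isLeft) := Iff.rfl

lemma neighborSet_inl (a : α) :
    (completeBipartiteGraph α β).neighborSet (Sum.inl a) = Set.range Sum.inr := by
  ext x
  cases x <;> simp [neighborSet, cbg_adj]

lemma neighborSet_inr (b : β) :
    (completeBipartiteGraph α β).neighborSet (Sum.inr b) = Set.range Sum.inl := by
  ext x
  cases x <;> simp [neighborSet, cbg_adj]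

lemma gdeg_inl (a : α) : gdeg (completeBipartiteGraph α β) (Sum.inl a) = Fintype.card β := by
  rw [gdeg, neighborSet_inl, ← Nat.card_coe_set_eq, Nat.card_range_of_injective Sum.inr_injective,
    Nat.card_eq_fintype_card]

lemma gdeg_inr (b : β) : gdeg (completeBipartiteGraph α β) (Sum.inr b) = Fintype.card α := by
  rw [gdeg, neighborSet_inr, ← Nat.card_coe_set_eq, Nat.card_range_of_injective Sum.inl_injective,
    Nat.card_eq_fintype_card]

lemma cbg_edgeSet :
    (completeBipartiteGraph α β).edgeSet =
      Set.range (fun p : α × β => s(Sum.inl p.1, Sum.inr p.2)) := by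
  ext e
  induction e with
  | _ x y =>
    constructor
    · intro h
      rw [mem_edgeSet] at h
      rcases h with ⟨hx, hy⟩ | ⟨hx, hy⟩
      · obtain ⟨a, rfl⟩ := Sum.isLeft_iff.1 hx
        obtain ⟨b, rfl⟩ := Sum.isRight_iff.1 hy
        exact ⟨(a, b), rfl⟩
      · obtain ⟨b, rfl⟩ := Sum.isRight_iff.1 hx
        obtain ⟨a, rfl⟩ := Sum.isLeft_iff.1 hy
        exact ⟨(a, b), Sym2.eq_swap⟩
    · rintro ⟨⟨a, b⟩, hab⟩
      rw [mem_edgeSet]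
      simp only at hab
      rcases Sym2.eq_iff.1 hab with ⟨h1, h2⟩ | ⟨h1, h2⟩ <;> subst h1 <;> subst h2 <;> simp [cbg_adj]

lemma cbg_edge_ncard :
    (completeBipartiteGraph α β).edgeSet.ncard = Fintype.card α * Fintype.card β := by
  rw [cbg_edgeSet, ← Nat.card_coe_set_eq, Nat.card_range_of_injective, Nat.card_prod,
    Nat.card_eq_fintype_card, Nat.card_eq_fintype_card]
  rintro ⟨a, b⟩ ⟨c, d⟩ h
  simp only [Sym2.eq_iff] at h
  rcases h with ⟨h1, h2⟩ | ⟨h1, h2⟩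
  · simp_all
  · exact absurd h1 (by simp)

end CBG
section MPCBG
variable (α β : Type*) [Fintype α] [Fintype β]

lemma mp_cbg [Nonempty α] [Nonempty β] (hne : Fintype.card α ≠ Fintype.card β) :
    mp (completeBipartiteGraph α β) = 2 := by
  set K := completeBipartiteGraph α β with hK
  apply le_antisymm
  · apply csSup_le'
    rintro m ⟨u, v, p, hp, hmono, rfl⟩
    by_contra hgt
    push_neg at hgt
    -- p has at least 3 support vertices
    match p, hp, hmono, hgt with
    | SimpleGraph.Walk.nil, hp, hmono, hgt => simp at hgt
    | SimpleGraph.Walk.cons h SimpleGraph.Walk.nil, hp, hmono, hgt => simp at hgt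
    | SimpleGraph.Walk.cons (v := b) h1 (SimpleGraph.Walk.cons (v := c) h2 q), hp, hmono, hgt =>
      -- support = u :: b :: c :: q.support.tail
      have hsup : (SimpleGraph.Walk.cons h1 (SimpleGraph.Walk.cons h2 q)).support
          = u :: b :: c :: q.support.tail := by
        conv_lhs => rw [SimpleGraph.Walk.support_cons, SimpleGraph.Walk.support_cons,
          q.support_eq_cons]
      have hchain := hmono
      rw [DegMonotone, hsup] at hchain
      simp only [List.map_cons, List.Chain', List.isChain_cons_cons] at hchain
      -- u and c are on the same side, opposite to b
      have hdudc : gdeg K u = gdeg K c ∧ gdeg K u ≠ gdeg K b := by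
        rcases u with a | a
        · obtain ⟨b', rfl⟩ : ∃ b', b = Sum.inr b' := by
            rcases b with b' | b'
            · exact absurd h1 (by simp [hK, cbg_adj])
            · exact ⟨b', rfl⟩
          obtain ⟨c', rfl⟩ : ∃ c', c = Sum.inl c' := by
            rcases c with c' | c'
            · exact ⟨c', rfl⟩
            · exact absurd h2 (by simp [hK, cbg_adj])
          simp [hK, gdeg_inl, gdeg_inr, hne.symm]
        · obtain ⟨b', rfl⟩ : ∃ b', b = Sum.inl b' := by
            rcases b with b' | b'
            · exact ⟨b', rfl⟩
            · exact absurd h1 (by simp [hK, cbg_adj])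
          obtain ⟨c', rfl⟩ : ∃ c', c = Sum.inr c' := by
            rcases c with c' | c'
            · exact absurd h2 (by simp [hK, cbg_adj])
            · exact ⟨c', rfl⟩
          simp [hK, gdeg_inl, gdeg_inr, hne]
      rcases hchain with ⟨hab, hbc, -⟩ | ⟨hab, hbc, -⟩
      · exact hdudc.2 (le_antisymm hab (hdudc.1 ▸ hbc))
      · exact hdudc.2 (le_antisymm (hdudc.1 ▸ hbc) hab)
  · -- there is an edge
    obtain ⟨a⟩ := ‹Nonempty α›
    obtain ⟨b⟩ := ‹Nonempty β›
    have hadj : K.Adj (Sum.inl a) (Sum.inr b) := by simp [hK, cbg_adj]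
    have hp : (SimpleGraph.Walk.cons hadj SimpleGraph.Walk.nil).IsPath := by
      simp [SimpleGraph.Walk.isPath_def, hadj.ne]
    have hm : DegMonotone K (SimpleGraph.Walk.cons hadj SimpleGraph.Walk.nil) := by
      rcases le_total (gdeg K (Sum.inl a)) (gdeg K (Sum.inr b)) with h | h
      · left; simp [List.Chain', h]
      · right; simp [List.Chain', h]
    simpa using le_mp _ hp hm

end MPCBG
section ISO
variable {V W : Type*} [Fintype V] [Fintype W] {G : SimpleGraph V} {H : SimpleGraph W}

lemma gdeg_iso (f : G ≃g H) (v : V) : gdeg H (f v) = gdeg G v := by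
  rw [gdeg, gdeg, ← Nat.card_coe_set_eq, ← Nat.card_coe_set_eq]
  exact (Nat.card_congr (f.mapNeighborSet v)).symm

lemma mp_le_iso (f : G ≃g H) : mp G ≤ mp H := by
  apply csSup_le'
  rintro m ⟨u, v, p, hp, hmono, rfl⟩
  have hfun : gdeg H ∘ (f.toHom : V → W) = gdeg G := funext fun v => gdeg_iso f v
  have hmem : p.support.length ∈
      {n | ∃ (u v : W) (q : H.Walk u v), q.IsPath ∧ DegMonotone H q ∧ q.support.length = n} := by
    refine ⟨f u, f v, p.map f.toHom,
      SimpleGraph.Walk.map_isPath_of_injective f.toEquiv.injective hp, ?_, ?_⟩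
    · rw [DegMonotone, SimpleGraph.Walk.support_map, List.map_map, hfun]
      exact hmono
    · rw [SimpleGraph.Walk.support_map, List.length_map]
  exact le_csSup ⟨Fintype.card W, fun m hm => mp_mem_le hm⟩ hmem

lemma mp_iso (f : G ≃g H) : mp G = mp H := le_antisymm (mp_le_iso f) (mp_le_iso f.symm)

lemma ncard_edge_iso (f : G ≃g H) : H.edgeSet.ncard = G.edgeSet.ncard := by
  rw [← Nat.card_coe_set_eq, ← Nat.card_coe_set_eq]
  exact (Nat.card_congr f.mapEdgeSet).symm

end ISO

end Aux

/-- Values of `f(n,3)`: for even `n ≥ 4`, `f(n,3) = n²/4 − 1`, attained by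
`K_{n/2+1, n/2−1}`; for odd `n ≥ 3`, `f(n,3) = (n²−1)/4`, attained by
`K_{(n+1)/2, (n−1)/2}`. -/
theorem mpEx_three (n : ℕ) (hn : 3 ≤ n) :
    (Even n → mpEx n 3 = n ^ 2 / 4 - 1 ∧
      mp (completeBipartiteGraph (Fin (n / 2 + 1)) (Fin (n / 2 - 1))) = 2 ∧
      (completeBipartiteGraph (Fin (n / 2 + 1)) (Fin (n / 2 - 1))).edgeSet.ncard =
        n ^ 2 / 4 - 1) ∧
    (Odd n → mpEx n 3 = (n ^ 2 - 1) / 4 ∧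
      mp (completeBipartiteGraph (Fin ((n + 1) / 2)) (Fin ((n - 1) / 2))) = 2 ∧
      (completeBipartiteGraph (Fin ((n + 1) / 2)) (Fin ((n - 1) / 2))).edgeSet.ncard =
        (n ^ 2 - 1) / 4) := by
  constructor
  · -- Even case
    intro he
    obtain ⟨r, hr⟩ := he
    have hr2 : 2 ≤ r := by omega
    have ha : n / 2 = r := by omega
    haveI : Nonempty (Fin (n / 2 + 1)) := ⟨⟨0, by omega⟩⟩
    haveI : Nonempty (Fin (n / 2 - 1)) := ⟨⟨0, by omega⟩⟩
    set K := completeBipartiteGraph (Fin (n / 2 + 1)) (Fin (n / 2 - 1)) with hK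
    have hcards : Fintype.card (Fin (n / 2 + 1)) ≠ Fintype.card (Fin (n / 2 - 1)) := by
      simp only [Fintype.card_fin]; omega
    have hmpK : mp K = 2 := mp_cbg _ _ hcards
    -- quarter computation
    have hq : n ^ 2 / 4 = n / 2 * (n / 2) := by
      have h2 : n ^ 2 = 4 * (n / 2 * (n / 2)) := by rw [ha, hr]; ring
      rw [h2, Nat.mul_div_cancel_left _ (by norm_num)]
    have h3 : (n / 2 + 1) * (n / 2 - 1) + 1 = n / 2 * (n / 2) := by
      obtain ⟨j, hj⟩ : ∃ j, r = j + 2 := ⟨r - 2, by omega⟩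
      rw [ha, hj]
      have : j + 2 - 1 = j + 1 := by omega
      rw [this]; ring
    have hKcard : K.edgeSet.ncard = n ^ 2 / 4 - 1 := by
      rw [hK, cbg_edge_ncard, Fintype.card_fin, Fintype.card_fin, hq]
      exact Nat.eq_sub_of_add_eq h3
    refine ⟨?_, hmpK, hKcard⟩
    -- mpEx value
    have hub : ∀ m ∈ {m | ∃ G : SimpleGraph (Fin n), mp G < 3 ∧ G.edgeSet.ncard = m},
        m ≤ n ^ 2 / 4 - 1 := by
      rintro m ⟨G, hG, rfl⟩
      have hb := edge_bound_even (k := n / 2) (by omega) (by omega) hG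
      rw [hq]
      exact hb
    rw [mpEx]
    apply le_antisymm
    · exact csSup_le' hub
    · -- membership
      have hsum : n / 2 + 1 + (n / 2 - 1) = n := by omega
      let e : (Fin (n / 2 + 1) ⊕ Fin (n / 2 - 1)) ≃ Fin n :=
        finSumFinEquiv.trans (finCongr hsum)
      let f := SimpleGraph.Iso.map e K
      refine le_csSup ⟨n ^ 2 / 4 - 1, hub⟩ ⟨K.map e, ?_, ?_⟩
      · rw [← mp_iso f, hmpK]; omega
      · rw [ncard_edge_iso f, hKcard]
  · -- Odd case
    intro ho
    obtain ⟨k, hk⟩ := ho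
    have hk1 : 1 ≤ k := by omega
    have ha : (n + 1) / 2 = k + 1 := by omega
    have hb : (n - 1) / 2 = k := by omega
    haveI : Nonempty (Fin ((n + 1) / 2)) := ⟨⟨0, by omega⟩⟩
    haveI : Nonempty (Fin ((n - 1) / 2)) := ⟨⟨0, by omega⟩⟩
    set K := completeBipartiteGraph (Fin ((n + 1) / 2)) (Fin ((n - 1) / 2)) with hK
    have hcards : Fintype.card (Fin ((n + 1) / 2)) ≠ Fintype.card (Fin ((n - 1) / 2)) := by
      simp only [Fintype.card_fin]; omega
    have hmpK : mp K = 2 := mp_cbg _ _ hcards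
    have hq : (n ^ 2 - 1) / 4 = k * k + k := by
      have h2 : n ^ 2 = 4 * (k * k + k) + 1 := by rw [hk]; ring
      rw [h2, Nat.add_sub_cancel, Nat.mul_div_cancel_left _ (by norm_num)]
    have hKcard : K.edgeSet.ncard = (n ^ 2 - 1) / 4 := by
      rw [hK, cbg_edge_ncard, Fintype.card_fin, Fintype.card_fin, hq, ha, hb]
      ring
    refine ⟨?_, hmpK, hKcard⟩
    have hub : ∀ m ∈ {m | ∃ G : SimpleGraph (Fin n), mp G < 3 ∧ G.edgeSet.ncard = m},
        m ≤ (n ^ 2 - 1) / 4 := by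
      rintro m ⟨G, hG, rfl⟩
      have hbd := edge_bound_odd (k := k) (by omega) hG hn
      rw [hq]
      exact hbd
    rw [mpEx]
    apply le_antisymm
    · exact csSup_le' hub
    · have hsum : (n + 1) / 2 + (n - 1) / 2 = n := by omega
      let e : (Fin ((n + 1) / 2) ⊕ Fin ((n - 1) / 2)) ≃ Fin n :=
        finSumFinEquiv.trans (finCongr hsum)
      let f := SimpleGraph.Iso.map e K
      refine le_csSup ⟨(n ^ 2 - 1) / 4, hub⟩ ⟨K.map e, ?_, ?_⟩
      · rw [← mp_iso f, hmpK]; omega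
      · rw [ncard_edge_iso f, hKcard]
end

section
/- Let a₁ < a₂ < … < a_{k−1} be positive integers summing to n. Then the complete (k−1)-partite graph with parts of sizes a₁,…,a_{k−1} satisfies mp(G) = k − 1; consequently f(n,k) ≥ Σ_{i<j} a_i a_j. -/
open SimpleGraph

private lemma walk_range {V : Type*} {G : SimpleGraph V} (g : ℕ → V) :
    ∀ m : ℕ, 0 < m → (∀ i, i + 1 < m → G.Adj (g i) (g (i + 1))) →
      ∃ p : G.Walk (g 0) (g (m - 1)), p.support = (List.range m).map g := by
  intro m
  induction m with
  | zero => omega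
  | succ m ih =>
    intro _ hadj
    rcases Nat.eq_zero_or_pos m with hm | hm
    · subst hm
      exact ⟨SimpleGraph.Walk.nil, by simp [List.range_succ]⟩
    · obtain ⟨p, hp⟩ := ih hm (fun i hi => hadj i (by omega))
      have hadjlast : G.Adj (g (m - 1)) (g m) := by
        have := hadj (m - 1) (by omega)
        rwa [Nat.sub_add_cancel hm] at this
      refine ⟨p.concat hadjlast, ?_⟩
      rw [SimpleGraph.Walk.support_concat, hp, List.range_succ]
      simp

/-- For positive integers `a₁ < a₂ < ⋯ < a_{k−1}` summing to `n`, the complete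
`(k−1)`-partite graph with parts of these sizes satisfies `mp(G) = k − 1`;
consequently `f(n,k) ≥ Σ_{i<j} aᵢ aⱼ`. -/
theorem mp_completeMultipartite_distinct_parts (n k : ℕ) (hk : 2 ≤ k)
    (a : Fin (k - 1) → ℕ) (ha1 : ∀ i, 1 ≤ a i) (hmono : StrictMono a)
    (hsum : ∑ i, a i = n)
    (G : SimpleGraph (Fin n)) (f : Fin n → Fin (k - 1))
    (hadj : ∀ x y, G.Adj x y ↔ f x ≠ f y)
    (hfib : ∀ i, (Finset.univ.filter fun x => f x = i).card = a i) :
    mp G = k - 1 ∧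
    (∑ p ∈ Finset.univ.filter (fun p : Fin (k - 1) × Fin (k - 1) => p.1 < p.2),
        a p.1 * a p.2) ≤ mpEx n k := by
  classical
  have hm : 1 ≤ k - 1 := by omega
  have hale : ∀ i, a i ≤ n := by
    intro i
    rw [← hsum]
    exact Finset.single_le_sum (fun _ _ => Nat.zero_le _) (Finset.mem_univ i)
  -- degree formula
  have hdeg : ∀ x : Fin n, gdeg G x = n - a (f x) := by
    intro x
    have hset : G.neighborSet x = {y | ¬ f y = f x} := by
      ext y
      simp only [SimpleGraph.mem_neighborSet, hadj, Set.mem_setOf_eq]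
      constructor
      · exact fun h => fun he => h he.symm
      · exact fun h => fun he => h he.symm
    rw [gdeg, hset, Set.ncard_eq_toFinset_card', Set.toFinset_setOf]
    have hsplit := Finset.card_filter_add_card_filter_not
      (s := (Finset.univ : Finset (Fin n))) (p := fun y => f y = f x)
    have hcardu : (Finset.univ : Finset (Fin n)).card = n := by simp
    have := hfib (f x)
    omega
  have hainj : ∀ i j : Fin (k - 1), n - a i = n - a j → i = j := by
    intro i j hij
    have h1 := hale i; have h2 := hale j
    exact hmono.injective (by omega)
  -- upper bound
  have hub : ∀ (u v : Fin n) (p : G.Walk u v), p.IsPath → DegMonotone G p →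
      p.support.length ≤ k - 1 := by
    intro u v p hp hmon
    have key : ∀ i (hi : i + 1 < p.support.length),
        gdeg G (p.support.get ⟨i, by omega⟩) ≠ gdeg G (p.support.get ⟨i+1, hi⟩) := by
      intro i hi heq
      have hchain := SimpleGraph.Walk.isChain_adj_support p
      have hadj' := List.isChain_iff_getElem.mp hchain i (by omega)
      have hne : f (p.support.get ⟨i, by omega⟩) ≠ f (p.support.get ⟨i+1, hi⟩) :=
        (hadj _ _).mp hadj'
      apply hne
      apply hainj
      rw [← hdeg, ← hdeg, heq]
    have hnd : (p.support.map f).Nodup := by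
      rw [List.Nodup]
      rw [List.pairwise_iff_getElem]
      intro i j hi hj hij hfeq
      simp only [List.getElem_map] at hfeq
      have hjlen : j < p.support.length := by simpa using hj
      have hilen : i < p.support.length := by simpa using hi
      have hdij : gdeg G p.support[i] = gdeg G p.support[j] := by
        rw [hdeg, hdeg, hfeq]
      -- monotone chain forces equality of consecutive degrees
      have hcons : gdeg G p.support[i] = gdeg G (p.support[i+1]'(by omega)) := by
        rcases hmon with hmon | hmon
        · haveI : IsTrans ℕ (· ≤ ·) := ⟨fun _ _ _ => le_trans⟩
          have hpw := (List.isChain_iff_pairwise.mp hmon)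
          rw [List.pairwise_iff_getElem] at hpw
          have h1 : gdeg G p.support[i] ≤ gdeg G (p.support[i+1]'(by omega)) := by
            have := hpw i (i+1) (by rw [List.length_map]; omega) (by rw [List.length_map]; omega) (by omega)
            simpa using this
          rcases Nat.lt_or_ge (i+1) j with hlt | hge
          · have h2 : gdeg G (p.support[i+1]'(by omega)) ≤ gdeg G p.support[j] := by
              have := hpw (i+1) j (by rw [List.length_map]; omega) (by rw [List.length_map]; omega) hlt
              simpa using this
            omega
          · have : i + 1 = j := by omega
            subst this; omega
        · haveI : IsTrans ℕ (fun a b => b ≤ a) := ⟨fun _ _ _ h h' => le_trans h' h⟩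
          have hpw := (List.isChain_iff_pairwise.mp hmon)
          rw [List.pairwise_iff_getElem] at hpw
          have h1 : gdeg G (p.support[i+1]'(by omega)) ≤ gdeg G p.support[i] := by
            have := hpw i (i+1) (by rw [List.length_map]; omega) (by rw [List.length_map]; omega) (by omega)
            simpa using this
          rcases Nat.lt_or_ge (i+1) j with hlt | hge
          · have h2 : gdeg G p.support[j] ≤ gdeg G (p.support[i+1]'(by omega)) := by
              have := hpw (i+1) j (by rw [List.length_map]; omega) (by rw [List.length_map]; omega) hlt
              simpa using this
            omega
          · have : i + 1 = j := by omega
            subst this; omega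
      exact key i (by omega) (by simpa [List.get_eq_getElem] using hcons)
    calc p.support.length = (p.support.map f).length := by simp
      _ ≤ Fintype.card (Fin (k - 1)) := hnd.length_le_card
      _ = k - 1 := by simp
  -- representatives
  have hrep : ∀ i : Fin (k - 1), ∃ x : Fin n, f x = i := by
    intro i
    have h1 := ha1 i
    have h2 := hfib i
    have hpos : 0 < (Finset.univ.filter fun x => f x = i).card := by omega
    obtain ⟨x, hx⟩ := Finset.card_pos.mp hpos
    exact ⟨x, (Finset.mem_filter.mp hx).2⟩
  choose g hg using hrep
  set g' : ℕ → Fin n := fun i => g ⟨min i (k - 1 - 1), by omega⟩ with hg'def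
  have hg'lt : ∀ i (hi : i < k - 1), f (g' i) = ⟨i, hi⟩ := by
    intro i hi
    have hmin : min i (k - 1 - 1) = i := by omega
    simp only [hg'def, hmin, hg]
  -- construct the path
  have hadjg : ∀ i, i + 1 < k - 1 → G.Adj (g' i) (g' (i + 1)) := by
    intro i hi
    rw [hadj, hg'lt i (by omega), hg'lt (i+1) hi]
    intro h
    simp only [Fin.mk.injEq] at h
    omega
  obtain ⟨p, hp⟩ := walk_range g' (k - 1) hm hadjg
  have hplen : p.support.length = k - 1 := by rw [hp]; simp
  have hpath : p.IsPath := by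
    rw [SimpleGraph.Walk.isPath_def, hp]
    apply List.Nodup.map_on
    · intro i hi j hj hij
      rw [List.mem_range] at hi hj
      have := congrArg f hij
      rw [hg'lt i hi, hg'lt j hj] at this
      simpa using this
    · exact List.nodup_range
  have hmondeg : DegMonotone G p := by
    right
    rw [hp, List.map_map]
    have hrange : k - 1 = (k - 1 - 1) + 1 := by omega
    unfold List.Chain'
    rw [List.isChain_map, hrange, List.isChain_range_succ]
    intro i hi
    simp only [Function.comp_apply]
    rw [hdeg, hdeg, hg'lt i (by omega), hg'lt (i+1) (by omega)]
    have : a ⟨i, by omega⟩ ≤ a ⟨i+1, by omega⟩ := le_of_lt (hmono (by simp [Fin.lt_def]))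
    omega
  -- mp G = m
  have hmp : mp G = k - 1 := by
    have hbdd : ∀ x ∈ {n' | ∃ (u v : Fin n) (p : G.Walk u v),
        p.IsPath ∧ DegMonotone G p ∧ p.support.length = n'}, x ≤ k - 1 := by
      rintro x ⟨u, v, q, hq1, hq2, hq3⟩
      rw [← hq3]; exact hub u v q hq1 hq2
    have hmem : (k - 1) ∈ {n' | ∃ (u v : Fin n) (p : G.Walk u v),
        p.IsPath ∧ DegMonotone G p ∧ p.support.length = n'} :=
      ⟨_, _, p, hpath, hmondeg, hplen⟩
    unfold mp
    exact le_antisymm (csSup_le ⟨k - 1, hmem⟩ hbdd) (le_csSup ⟨k - 1, hbdd⟩ hmem)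
  refine ⟨hmp, ?_⟩
  -- edge count
  have hdegdeg : ∀ x, G.degree x = n - a (f x) := by
    intro x
    rw [← hdeg x, gdeg, SimpleGraph.degree, Set.ncard_eq_toFinset_card']
    congr 1
  have hsumdeg : ∑ x : Fin n, G.degree x = ∑ i : Fin (k - 1), a i * (n - a i) := by
    rw [← Finset.sum_fiberwise Finset.univ f (fun x => G.degree x)]
    apply Finset.sum_congr rfl
    intro i _
    have hcongr : ∀ x ∈ Finset.univ.filter (fun x => f x = i), G.degree x = n - a i := by
      intro x hx
      rw [hdegdeg x, (Finset.mem_filter.mp hx).2]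
    rw [Finset.sum_congr rfl hcongr, Finset.sum_const, hfib i, smul_eq_mul]
  -- the combinatorial identity
  set S := ∑ p ∈ Finset.univ.filter (fun p : Fin (k - 1) × Fin (k - 1) => p.1 < p.2),
      a p.1 * a p.2 with hSdef
  have hsq : (∑ p : Fin (k - 1) × Fin (k - 1), a p.1 * a p.2) = n * n := by
    rw [← Finset.univ_product_univ, Finset.sum_product]
    rw [← Finset.sum_mul_sum]
    rw [hsum]
  have hdiag : (∑ p ∈ Finset.univ.filter (fun p : Fin (k - 1) × Fin (k - 1) => p.1 = p.2),
      a p.1 * a p.2) = ∑ i : Fin (k - 1), a i * a i := by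
    apply Finset.sum_nbij' (i := fun p => p.1) (j := fun i => (i, i))
    · rintro ⟨x, y⟩ hxy
      exact Finset.mem_univ _
    · intro i _
      simp
    · rintro ⟨x, y⟩ hxy
      have : x = y := (Finset.mem_filter.mp hxy).2
      simp [this]
    · intro i _; rfl
    · rintro ⟨x, y⟩ hxy
      have : x = y := (Finset.mem_filter.mp hxy).2
      simp [this]
  have hswap : (∑ p ∈ Finset.univ.filter (fun p : Fin (k - 1) × Fin (k - 1) => p.2 < p.1),
      a p.1 * a p.2) = S := by
    rw [hSdef]
    apply Finset.sum_nbij' (i := fun p => Prod.swap p) (j := fun p => Prod.swap p)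
    · rintro ⟨x, y⟩ hxy
      simp only [Finset.mem_filter, Finset.mem_univ, true_and] at hxy ⊢
      exact hxy
    · rintro ⟨x, y⟩ hxy
      simp only [Finset.mem_filter, Finset.mem_univ, true_and] at hxy ⊢
      exact hxy
    · intro p _; simp
    · intro p _; simp
    · intro p _; simp [mul_comm]
  have hsplit1 : (∑ p ∈ Finset.univ.filter (fun p : Fin (k - 1) × Fin (k - 1) => p.1 < p.2),
        a p.1 * a p.2) + (∑ p ∈ Finset.univ.filter (fun p : Fin (k - 1) × Fin (k - 1) => ¬ p.1 < p.2),
        a p.1 * a p.2) = ∑ p : Fin (k - 1) × Fin (k - 1), a p.1 * a p.2 :=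
    Finset.sum_filter_add_sum_filter_not _ _ _
  have hsplit2 : (∑ p ∈ Finset.univ.filter (fun p : Fin (k - 1) × Fin (k - 1) => ¬ p.1 < p.2),
        a p.1 * a p.2) = (∑ p ∈ Finset.univ.filter (fun p : Fin (k - 1) × Fin (k - 1) => p.2 < p.1),
        a p.1 * a p.2) + ∑ p ∈ Finset.univ.filter (fun p : Fin (k - 1) × Fin (k - 1) => p.1 = p.2),
        a p.1 * a p.2 := by
    rw [← Finset.sum_filter_add_sum_filter_not
      (Finset.univ.filter (fun p : Fin (k - 1) × Fin (k - 1) => ¬ p.1 < p.2))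
      (fun p : Fin (k - 1) × Fin (k - 1) => p.2 < p.1)]
    congr 1
    · apply Finset.sum_congr _ (fun _ _ => rfl)
      rw [Finset.filter_filter]
      apply Finset.filter_congr
      rintro ⟨x, y⟩ _
      simp only [not_lt, iff_iff_implies_and_implies]
      constructor
      · rintro ⟨_, h⟩; exact h
      · intro h; exact ⟨le_of_lt h, h⟩
    · apply Finset.sum_congr _ (fun _ _ => rfl)
      rw [Finset.filter_filter]
      apply Finset.filter_congr
      rintro ⟨x, y⟩ _
      simp only [not_lt, iff_iff_implies_and_implies]
      constructor
      · rintro ⟨h1, h2⟩; exact le_antisymm h2 h1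
      · intro h; subst h; exact ⟨le_refl _, le_refl _⟩
  have hmulsub : ∀ i : Fin (k - 1), a i * (n - a i) + a i * a i = a i * n := by
    intro i
    rw [← Nat.mul_add, Nat.sub_add_cancel (hale i)]
  have hsum2 : (∑ i : Fin (k - 1), a i * (n - a i)) + (∑ i : Fin (k - 1), a i * a i) = n * n := by
    rw [← Finset.sum_add_distrib]
    rw [Finset.sum_congr rfl (fun i _ => hmulsub i), ← Finset.sum_mul, hsum]
  have hEcard : G.edgeSet.ncard = G.edgeFinset.card := by
    rw [Set.ncard_eq_toFinset_card']
    congr 1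
  have h2E : 2 * G.edgeFinset.card = ∑ x : Fin n, G.degree x :=
    (SimpleGraph.sum_degrees_eq_twice_card_edges G).symm
  have hfinal : G.edgeSet.ncard = S := by
    have h1 : 2 * G.edgeFinset.card + (∑ i : Fin (k - 1), a i * a i) = n * n := by
      rw [h2E, hsumdeg]; exact hsum2
    have h2 : S + ((∑ p ∈ Finset.univ.filter (fun p : Fin (k - 1) × Fin (k - 1) => p.2 < p.1),
        a p.1 * a p.2) + ∑ p ∈ Finset.univ.filter (fun p : Fin (k - 1) × Fin (k - 1) => p.1 = p.2),
        a p.1 * a p.2) = n * n := by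
      rw [← hsplit2, hsplit1, hsq]
    rw [hswap, hdiag] at h2
    omega
  -- conclude
  have hbddEx : BddAbove {m' | ∃ H : SimpleGraph (Fin n), mp H < k ∧ H.edgeSet.ncard = m'} := by
    refine ⟨Fintype.card (Sym2 (Fin n)), ?_⟩
    rintro x ⟨H, _, rfl⟩
    calc H.edgeSet.ncard ≤ (Set.univ : Set (Sym2 (Fin n))).ncard :=
          Set.ncard_le_ncard (Set.subset_univ _) Set.finite_univ
      _ = Fintype.card (Sym2 (Fin n)) := by rw [Set.ncard_univ, Nat.card_eq_fintype_card]
  have hmemEx : S ∈ {m' | ∃ H : SimpleGraph (Fin n), mp H < k ∧ H.edgeSet.ncard = m'} :=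
    ⟨G, by omega, hfinal⟩
  exact le_csSup hbddEx hmemEx
end
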